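/- arXiv:2011.09960 — 2 statements merged into one kernel-verified Lean document; each statement's English description precedes it below -/
import Mathlib

section
/- For every real θ ∈ [0,1], every real ε > 0, and every integer n ≥ 2, the supremum over ε-DP n-tuples (p_i) of the arithmetic mean over all ordered pairs i ≠ j of J_θ(p_i,p_j) equals the supremum over ε-DP n-tuples of min_{i≠j} J_θ(p_i,p_j); in particular both equal ((f_θ(e^ε,1) + f_θ(1,e^ε))/(n−1)) · max_{1 ≤ k ≤ ⌊n/2⌋} k(n−k)/(k·e^ε + n − k), where f_θ(α,β) = (α−β)²/((1−θ)α + θβ). -/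
open scoped BigOperators Classical ComplexOrder
open Matrix

noncomputable section

/-- `p` is a probability vector in `ℝ^d`. -/
def IsProbVec {d : ℕ} (p : Fin d → ℝ) : Prop :=
  (∀ k, 0 ≤ p k) ∧ ∑ k, p k = 1

/-- `(p i)_{i=1}^n` is an `ε`-differentially private `n`-tuple of probability vectors. -/
def IsDP {n d : ℕ} (ε : ℝ) (p : Fin n → Fin d → ℝ) : Prop :=
  (∀ i, IsProbVec (p i)) ∧ ∀ i j k, p i k ≤ Real.exp ε * p j k

/-- Classical RLD Fisher information `J_θ(p,q)`. -/
def Jc {d : ℕ} (θ : ℝ) (p q : Fin d → ℝ) : ℝ :=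
  ∑ k, (q k - p k) ^ 2 / ((1 - θ) * p k + θ * q k)

/-- `ρ` is a density matrix on `ℂ^d`. -/
def IsDensityMatrix {d : ℕ} (ρ : Matrix (Fin d) (Fin d) ℂ) : Prop :=
  ρ.PosSemidef ∧ ρ.trace = 1

/-- `(ρ i)_{i=1}^n` is a classical-quantum `ε`-differentially private `n`-tuple. -/
def IsCQDP {n d : ℕ} (ε : ℝ) (ρ : Fin n → Matrix (Fin d) (Fin d) ℂ) : Prop :=
  (∀ i, IsDensityMatrix (ρ i)) ∧ ∀ i j, (Real.exp ε • ρ j - ρ i).PosSemidef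

/-- `(ρ i)_{i=1}^n` lies in the essentially classical set `EC_n(ε)`. -/
def InEC {n d : ℕ} (ε : ℝ) (ρ : Fin n → Matrix (Fin d) (Fin d) ℂ) : Prop :=
  ∃ (m : ℕ) (p : Fin n → Fin m → ℝ) (σ : Fin m → Matrix (Fin d) (Fin d) ℂ),
    IsDP ε p ∧ (∀ k, IsDensityMatrix (σ k)) ∧ ∀ i, ρ i = ∑ k, (p i k : ℂ) • σ k

/-- Quantum RLD Fisher information `J_θ(ρ,σ) = Tr((σ−ρ)²((1−θ)ρ+θσ)⁻¹)`. -/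
def Jq {d : ℕ} (θ : ℝ) (ρ σ : Matrix (Fin d) (Fin d) ℂ) : ℝ :=
  (((σ - ρ) ^ 2 * ((1 - θ : ℂ) • ρ + (θ : ℂ) • σ)⁻¹).trace).re

/-- The function `f_θ(α,β) = (α−β)²/((1−θ)α+θβ)`. -/
def fTheta (θ α β : ℝ) : ℝ := (α - β) ^ 2 / ((1 - θ) * α + θ * β)

/-- `min_{i≠j} J_θ(p_i,p_j)` (classical). -/
def minPairsC {n d : ℕ} (θ : ℝ) (p : Fin n → Fin d → ℝ) : ℝ :=
  ⨅ ij : {q : Fin n × Fin n // q.1 ≠ q.2}, Jc θ (p ij.val.1) (p ij.val.2)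

/-- `min_{i≠j} J_θ(ρ_i,ρ_j)` (quantum). -/
def minPairsQ {n d : ℕ} (θ : ℝ) (ρ : Fin n → Matrix (Fin d) (Fin d) ℂ) : ℝ :=
  ⨅ ij : {q : Fin n × Fin n // q.1 ≠ q.2}, Jq θ (ρ ij.val.1) (ρ ij.val.2)

/-- `avg_{i≠j} J_θ(p_i,p_j)` (classical): arithmetic mean over ordered pairs `i ≠ j`. -/
def avgPairsC {n d : ℕ} (θ : ℝ) (p : Fin n → Fin d → ℝ) : ℝ :=
  (∑ i, ∑ j, if i ≠ j then Jc θ (p i) (p j) else 0) / ((n : ℝ) * ((n : ℝ) - 1))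

/-- `avg_{i≠j} J_θ(ρ_i,ρ_j)` (quantum): arithmetic mean over ordered pairs `i ≠ j`. -/
def avgPairsQ {n d : ℕ} (θ : ℝ) (ρ : Fin n → Matrix (Fin d) (Fin d) ℂ) : ℝ :=
  (∑ i, ∑ j, if i ≠ j then Jq θ (ρ i) (ρ j) else 0) / ((n : ℝ) * ((n : ℝ) - 1))

/-- `M_n^C(ε;J_θ)`: supremum of `min_{i≠j} J_θ(p_i,p_j)` over `ε`-DP `n`-tuples with
positive entries, over all dimensions `d`. -/
def MC (n : ℕ) (ε θ : ℝ) : ℝ :=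
  sSup {x : ℝ | ∃ (d : ℕ) (p : Fin n → Fin d → ℝ),
    IsDP ε p ∧ (∀ i k, 0 < p i k) ∧ x = minPairsC θ p}

/-- `M_n^EC(ε;J_θ)`: supremum of `min_{i≠j} J_θ(ρ_i,ρ_j)` over full-rank `n`-tuples in
`EC_n(ε)`, over all dimensions `d`. -/
def MEC (n : ℕ) (ε θ : ℝ) : ℝ :=
  sSup {x : ℝ | ∃ (d : ℕ) (ρ : Fin n → Matrix (Fin d) (Fin d) ℂ),
    InEC ε ρ ∧ (∀ i, (ρ i).PosDef) ∧ x = minPairsQ θ ρ}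

/-- `M_n^CQ(ε;J_θ)`: supremum of `min_{i≠j} J_θ(ρ_i,ρ_j)` over full-rank CQ `ε`-DP
`n`-tuples, over all dimensions `d`. -/
def MCQ (n : ℕ) (ε θ : ℝ) : ℝ :=
  sSup {x : ℝ | ∃ (d : ℕ) (ρ : Fin n → Matrix (Fin d) (Fin d) ℂ),
    IsCQDP ε ρ ∧ (∀ i, (ρ i).PosDef) ∧ x = minPairsQ θ ρ}

/-- `M_2^C(ε;J_θ)` as the supremum of `J_θ(p,q)` over `ε`-DP pairs with positive entries. -/
def M2C (ε θ : ℝ) : ℝ :=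
  sSup {x : ℝ | ∃ (d : ℕ) (p q : Fin d → ℝ),
    IsProbVec p ∧ IsProbVec q ∧ (∀ k, 0 < p k) ∧ (∀ k, 0 < q k) ∧
    (∀ k, p k ≤ Real.exp ε * q k ∧ q k ≤ Real.exp ε * p k) ∧
    x = Jc θ p q}

/-- `max_{1 ≤ k ≤ n/2} k(n−k)/(k e^ε + n − k)`. -/
def maxK (n : ℕ) (ε : ℝ) : ℝ :=
  sSup {x : ℝ | ∃ k : ℕ, 1 ≤ k ∧ 2 * k ≤ n ∧
    x = ((k : ℝ) * ((n : ℝ) - (k : ℝ))) / ((k : ℝ) * Real.exp ε + (n : ℝ) - (k : ℝ))}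


/-- The supremum of `avg_{i≠j} J_θ(p_i,p_j)` over `ε`-DP `n`-tuples with positive entries. -/
def MCavg (n : ℕ) (ε θ : ℝ) : ℝ :=
  sSup {x : ℝ | ∃ (d : ℕ) (p : Fin n → Fin d → ℝ),
    IsDP ε p ∧ (∀ i k, 0 < p i k) ∧ x = avgPairsC θ p}

lemma fTheta_self (θ a : ℝ) : fTheta θ a a = 0 := by simp [fTheta]

lemma fTheta_nonneg {θ : ℝ} (hθ0 : 0 ≤ θ) (hθ1 : θ ≤ 1) {a b : ℝ} (ha : 0 ≤ a) (hb : 0 ≤ b) :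
    0 ≤ fTheta θ a b := by
  apply div_nonneg (sq_nonneg _); nlinarith

lemma fTheta_smul {θ m a b : ℝ} (hm : m ≠ 0) :
    fTheta θ (m * a) (m * b) = m * fTheta θ a b := by
  unfold fTheta
  have h1 : (m * a - m * b) ^ 2 = m * (m * ((a - b) ^ 2)) := by ring
  have h2 : (1 - θ) * (m * a) + θ * (m * b) = m * ((1 - θ) * a + θ * b) := by ring
  rw [h1, h2, mul_div_mul_left _ _ hm, mul_div_assoc]

lemma convexcomb_pos {U V a b : ℝ} (hU : 0 < U) (hV : 0 < V) (ha : 0 ≤ a) (hb : 0 ≤ b)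
    (hab : a + b = 1) : 0 < a * U + b * V := by
  have h1 := mul_le_mul_of_nonneg_left (min_le_left U V) ha
  have h2 := mul_le_mul_of_nonneg_left (min_le_right U V) hb
  have hm : 0 < min U V := lt_min hU hV
  nlinarith

lemma jensen2 {p q U V a b : ℝ} (hU : 0 < U) (hV : 0 < V) (ha : 0 ≤ a) (hb : 0 ≤ b)
    (hab : a + b = 1) :
    (a * p + b * q) ^ 2 / (a * U + b * V) ≤ a * (p ^ 2 / U) + b * (q ^ 2 / V) := by
  have hden : 0 < a * U + b * V := convexcomb_pos hU hV ha hb hab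
  rw [div_le_iff₀ hden]
  have e1 : a * (p ^ 2 / U) = a * p ^ 2 / U := by ring
  have e2 : b * (q ^ 2 / V) = b * q ^ 2 / V := by ring
  rw [e1, e2, div_add_div _ _ hU.ne' hV.ne']
  rw [div_mul_eq_mul_div, le_div_iff₀ (by positivity)]
  nlinarith [mul_nonneg (mul_nonneg ha hb) (sq_nonneg (p * V - q * U))]

lemma jensen_fst {θ : ℝ} (hθ0 : 0 ≤ θ) (hθ1 : θ ≤ 1) {r x y a b : ℝ}
    (hr : 1 ≤ r) (hx : 1 ≤ x) (hy : 1 ≤ y) (ha : 0 ≤ a) (hb : 0 ≤ b) (hab : a + b = 1) :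
    fTheta θ (a * x + b * y) r ≤ a * fTheta θ x r + b * fTheta θ y r := by
  have hU : (0:ℝ) < (1 - θ) * x + θ * r := by nlinarith
  have hV : (0:ℝ) < (1 - θ) * y + θ * r := by nlinarith
  have h := jensen2 (p := x - r) (q := y - r) hU hV ha hb hab
  unfold fTheta
  have e1 : (a * x + b * y - r) = (a * (x - r) + b * (y - r)) := by linear_combination r * hab
  have e2 : (1 - θ) * (a * x + b * y) + θ * r
      = a * ((1 - θ) * x + θ * r) + b * ((1 - θ) * y + θ * r) := by linear_combination (-(θ * r)) * hab
  rw [e1, e2]; exact h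

lemma jensen_snd {θ : ℝ} (hθ0 : 0 ≤ θ) (hθ1 : θ ≤ 1) {r x y a b : ℝ}
    (hr : 1 ≤ r) (hx : 1 ≤ x) (hy : 1 ≤ y) (ha : 0 ≤ a) (hb : 0 ≤ b) (hab : a + b = 1) :
    fTheta θ r (a * x + b * y) ≤ a * fTheta θ r x + b * fTheta θ r y := by
  have hU : (0:ℝ) < (1 - θ) * r + θ * x := by nlinarith
  have hV : (0:ℝ) < (1 - θ) * r + θ * y := by nlinarith
  have h := jensen2 (p := r - x) (q := r - y) hU hV ha hb hab
  unfold fTheta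
  have e1 : (r - (a * x + b * y)) = (a * (r - x) + b * (r - y)) := by linear_combination (-r) * hab
  have e2 : (1 - θ) * r + θ * (a * x + b * y)
      = a * ((1 - θ) * r + θ * x) + b * ((1 - θ) * r + θ * y) := by
    linear_combination (-((1 - θ) * r)) * hab
  rw [e1, e2]; exact h



def Spair (θ : ℝ) {n : ℕ} (v : Fin n → ℝ) : ℝ :=
  ∑ i, ∑ j, if i ≠ j then fTheta θ (v i) (v j) else 0

lemma Spair_jensen {θ : ℝ} (hθ0 : 0 ≤ θ) (hθ1 : θ ≤ 1) {n : ℕ} (v : Fin n → ℝ)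
    (hv : ∀ i, 1 ≤ v i) (a0 : Fin n) {x y s t : ℝ} (hx : 1 ≤ x) (hy : 1 ≤ y)
    (hs : 0 ≤ s) (ht : 0 ≤ t) (hst : s + t = 1) :
    Spair θ (Function.update v a0 (s * x + t * y)) ≤
      s * Spair θ (Function.update v a0 x) + t * Spair θ (Function.update v a0 y) := by
  unfold Spair
  rw [Finset.mul_sum, Finset.mul_sum, ← Finset.sum_add_distrib]
  apply Finset.sum_le_sum
  intro i _
  rw [Finset.mul_sum, Finset.mul_sum, ← Finset.sum_add_distrib]
  apply Finset.sum_le_sum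
  intro j _
  by_cases hij : i = j
  · simp [hij, hst]
  · simp only [if_pos (show i ≠ j from hij)]
    by_cases hia : i = a0
    · have hja : j ≠ a0 := fun h => hij (hia.trans h.symm)
      have h1 : ∀ z : ℝ, Function.update v a0 z i = z := fun z => by
        rw [hia]; exact Function.update_self _ _ _
      have h2 : ∀ z : ℝ, Function.update v a0 z j = v j := fun z =>
        Function.update_of_ne hja _ _
      rw [h1, h1, h1, h2, h2, h2]
      exact jensen_fst hθ0 hθ1 (hv j) hx hy hs ht hst
    · by_cases hja : j = a0
      · have h1 : ∀ z : ℝ, Function.update v a0 z j = z := fun z => by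
          rw [hja]; exact Function.update_self _ _ _
        have h2 : ∀ z : ℝ, Function.update v a0 z i = v i := fun z =>
          Function.update_of_ne hia _ _
        rw [h1, h1, h1, h2, h2, h2]
        exact jensen_snd hθ0 hθ1 (hv i) hx hy hs ht hst
      · have h1 : ∀ z : ℝ, Function.update v a0 z i = v i := fun z =>
          Function.update_of_ne hia _ _
        have h2 : ∀ z : ℝ, Function.update v a0 z j = v j := fun z =>
          Function.update_of_ne hja _ _
        rw [h1, h1, h1, h2, h2, h2, ← add_mul, hst, one_mul]


lemma box_reduce {θ E c' : ℝ} (hθ0 : 0 ≤ θ) (hθ1 : θ ≤ 1) (hE : 1 < E) {n : ℕ}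
    (hvert : ∀ v : Fin n → ℝ, (∀ i, v i = 1 ∨ v i = E) → Spair θ v ≤ c' * ∑ i, v i) :
    ∀ v : Fin n → ℝ, (∀ i, 1 ≤ v i ∧ v i ≤ E) → Spair θ v ≤ c' * ∑ i, v i := by
  suffices h : ∀ s : Finset (Fin n), ∀ v : Fin n → ℝ, (∀ i, 1 ≤ v i ∧ v i ≤ E) →
      (∀ i, i ∉ s → v i = 1 ∨ v i = E) → Spair θ v ≤ c' * ∑ i, v i by
    intro v hv
    exact h Finset.univ v hv (fun i hi => absurd (Finset.mem_univ i) hi)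
  intro s
  induction s using Finset.induction_on with
  | empty => intro v hv hout; exact hvert v (fun i => hout i (Finset.notMem_empty i))
  | @insert a0 s ha0 ih =>
    intro v hv hout
    set z := v a0 with hz
    have hz1 : 1 ≤ z := (hv a0).1
    have hzE : z ≤ E := (hv a0).2
    have hE1 : (0:ℝ) < E - 1 := by linarith
    set s' : ℝ := (E - z) / (E - 1) with hs'
    set t' : ℝ := (z - 1) / (E - 1) with ht'
    have hs : 0 ≤ s' := div_nonneg (by linarith) hE1.le
    have ht : 0 ≤ t' := div_nonneg (by linarith) hE1.le
    have hst : s' + t' = 1 := by rw [hs', ht']; field_simp; ring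
    have hcomb : s' * 1 + t' * E = z := by rw [hs', ht']; field_simp; ring
    have hupd : Function.update v a0 (s' * 1 + t' * E) = v := by
      rw [hcomb]; exact Function.update_eq_self a0 v
    have key := Spair_jensen hθ0 hθ1 v (fun i => (hv i).1) a0 (le_refl 1) hE.le hs ht hst
    rw [hupd] at key
    -- bounds for the two endpoint configurations
    have hb1 : Spair θ (Function.update v a0 1) ≤ c' * ∑ i, Function.update v a0 1 i := by
      apply ih
      · intro i
        by_cases hia : i = a0
        · subst hia; rw [Function.update_self]; exact ⟨le_refl 1, hE.le⟩
        · rw [Function.update_of_ne hia]; exact hv i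
      · intro i hi
        by_cases hia : i = a0
        · subst hia; rw [Function.update_self]; exact Or.inl rfl
        · rw [Function.update_of_ne hia]
          exact hout i (by simp [Finset.mem_insert, hia, hi])
    have hb2 : Spair θ (Function.update v a0 E) ≤ c' * ∑ i, Function.update v a0 E i := by
      apply ih
      · intro i
        by_cases hia : i = a0
        · subst hia; rw [Function.update_self]; exact ⟨hE.le, le_refl E⟩
        · rw [Function.update_of_ne hia]; exact hv i
      · intro i hi
        by_cases hia : i = a0
        · subst hia; rw [Function.update_self]; exact Or.inr rfl
        · rw [Function.update_of_ne hia]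
          exact hout i (by simp [Finset.mem_insert, hia, hi])
    have hsum1 : ∑ i, Function.update v a0 (1:ℝ) i = 1 + ∑ i ∈ Finset.univ \ {a0}, v i :=
      Finset.sum_update_of_mem (Finset.mem_univ a0) v 1
    have hsum2 : ∑ i, Function.update v a0 E i = E + ∑ i ∈ Finset.univ \ {a0}, v i :=
      Finset.sum_update_of_mem (Finset.mem_univ a0) v E
    have hsumv : ∑ i, v i = z + ∑ i ∈ Finset.univ \ {a0}, v i := by
      conv_lhs => rw [← Function.update_eq_self a0 v]
      exact Finset.sum_update_of_mem (Finset.mem_univ a0) v z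
    calc Spair θ v ≤ s' * Spair θ (Function.update v a0 1) + t' * Spair θ (Function.update v a0 E) := key
      _ ≤ s' * (c' * ∑ i, Function.update v a0 1 i) + t' * (c' * ∑ i, Function.update v a0 E i) := by
          apply add_le_add (mul_le_mul_of_nonneg_left hb1 hs) (mul_le_mul_of_nonneg_left hb2 ht)
      _ = c' * ∑ i, v i := by
          rw [hsum1, hsum2, hsumv]
          linear_combination (c' * ∑ i ∈ Finset.univ \ {a0}, v i) * hst + c' * hcomb


lemma indicator_sum {n : ℕ} (A : Finset (Fin n)) :
    ∑ i, (if i ∈ A then (1:ℝ) else 0) = (A.card : ℝ) := by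
  simp

lemma vertex_bound {θ E K : ℝ} (hθ0 : 0 ≤ θ) (hθ1 : θ ≤ 1) (hE : 1 ≤ E) {n : ℕ}
    (hK : ∀ k : ℕ, k ≤ n → (k:ℝ) * ((n:ℝ) - (k:ℝ)) ≤ K * ((k:ℝ) * E + (n:ℝ) - (k:ℝ)))
    (v : Fin n → ℝ) (hv : ∀ i, v i = 1 ∨ v i = E) :
    Spair θ v ≤ ((fTheta θ E 1 + fTheta θ 1 E) * K) * ∑ i, v i := by
  classical
  set A : Finset (Fin n) := Finset.univ.filter (fun i => v i = E) with hA
  set k : ℕ := A.card with hk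
  have hkn : k ≤ n := by
    rw [hk]
    calc A.card ≤ Finset.univ.card := Finset.card_filter_le _ _
      _ = n := by simp
  have hmemA : ∀ i, i ∈ A → v i = E := fun i hi => (Finset.mem_filter.mp hi).2
  have hnotA : ∀ i, i ∉ A → v i = 1 := by
    intro i hi
    refine (hv i).resolve_right fun h => hi ?_
    rw [hA]; exact Finset.mem_filter.mpr ⟨Finset.mem_univ i, h⟩
  have hterm : ∀ i j : Fin n, (if i ≠ j then fTheta θ (v i) (v j) else 0) =
      (if i ∈ A then (1:ℝ) else 0) * (1 - (if j ∈ A then (1:ℝ) else 0)) * fTheta θ E 1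
      + (if j ∈ A then (1:ℝ) else 0) * (1 - (if i ∈ A then (1:ℝ) else 0)) * fTheta θ 1 E := by
    intro i j
    by_cases hij : i = j
    · subst hij
      by_cases hiA : i ∈ A <;> simp [hiA]
    · rw [if_pos (show i ≠ j from hij)]
      by_cases hiA : i ∈ A <;> by_cases hjA : j ∈ A <;>
        simp only [hiA, hjA, if_true, if_false, ite_true, ite_false]
      · rw [hmemA i hiA, hmemA j hjA, fTheta_self]; ring
      · rw [hmemA i hiA, hnotA j hjA]; ring
      · rw [hnotA i hiA, hmemA j hjA]; ring
      · rw [hnotA i hiA, hnotA j hjA, fTheta_self]; ring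
  have prodsum : ∀ (f g : Fin n → ℝ) (c : ℝ),
      ∑ i, ∑ j, f i * g j * c = (∑ i, f i) * (∑ j, g j) * c := by
    intro f g c
    have hinner : ∀ i, ∑ j, f i * g j * c = f i * ((∑ j, g j) * c) := by
      intro i
      have e : ∀ j, f i * g j * c = f i * (g j * c) := fun j => by ring
      rw [Finset.sum_congr rfl (fun j _ => e j), ← Finset.mul_sum, ← Finset.sum_mul]
    rw [Finset.sum_congr rfl (fun i _ => hinner i), ← Finset.sum_mul]
    ring
  have hSv : Spair θ v = ((k:ℝ) * ((n:ℝ) - (k:ℝ))) * (fTheta θ E 1 + fTheta θ 1 E) := by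
    unfold Spair
    have : ∀ i : Fin n, ∑ j, (if i ≠ j then fTheta θ (v i) (v j) else 0) =
        ∑ j, ((if i ∈ A then (1:ℝ) else 0) * (1 - (if j ∈ A then (1:ℝ) else 0)) * fTheta θ E 1
        + (if j ∈ A then (1:ℝ) else 0) * (1 - (if i ∈ A then (1:ℝ) else 0)) * fTheta θ 1 E) :=
      fun i => Finset.sum_congr rfl (fun j _ => hterm i j)
    rw [Finset.sum_congr rfl (fun i _ => this i)]
    have hsplit : ∑ i, ∑ j, ((if i ∈ A then (1:ℝ) else 0) * (1 - (if j ∈ A then (1:ℝ) else 0)) * fTheta θ E 1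
        + (if j ∈ A then (1:ℝ) else 0) * (1 - (if i ∈ A then (1:ℝ) else 0)) * fTheta θ 1 E)
        = (∑ i, (if i ∈ A then (1:ℝ) else 0)) * (∑ j, (1 - (if j ∈ A then (1:ℝ) else 0))) * fTheta θ E 1
        + (∑ i, (1 - (if i ∈ A then (1:ℝ) else 0))) * (∑ j, (if j ∈ A then (1:ℝ) else 0)) * fTheta θ 1 E := by
      rw [← prodsum, ← prodsum]
      rw [← Finset.sum_add_distrib]
      apply Finset.sum_congr rfl; intro i _
      rw [← Finset.sum_add_distrib]
      apply Finset.sum_congr rfl; intro j _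
      ring
    rw [hsplit, indicator_sum]
    have h1m : ∑ j, (1 - (if j ∈ A then (1:ℝ) else 0)) = (n:ℝ) - (k:ℝ) := by
      rw [Finset.sum_sub_distrib, indicator_sum]
      simp [hk]
    rw [h1m, ← hk]
    ring
  have hSum : ∑ i, v i = (k:ℝ) * E + (n:ℝ) - (k:ℝ) := by
    have : ∀ i : Fin n, v i = (E - 1) * (if i ∈ A then (1:ℝ) else 0) + 1 := by
      intro i
      by_cases hiA : i ∈ A
      · rw [hmemA i hiA]; simp [hiA]
      · rw [hnotA i hiA]; simp [hiA]
    rw [Finset.sum_congr rfl (fun i _ => this i), Finset.sum_add_distrib, ← Finset.mul_sum,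
      indicator_sum]
    simp
    ring
  rw [hSv, hSum]
  have hf : 0 ≤ fTheta θ E 1 + fTheta θ 1 E :=
    add_nonneg (fTheta_nonneg hθ0 hθ1 (by linarith) (by linarith))
      (fTheta_nonneg hθ0 hθ1 (by linarith) (by linarith))
  have := mul_le_mul_of_nonneg_left (hK k hkn) hf
  nlinarith [this]


def gK (n : ℕ) (ε : ℝ) (k : ℕ) : ℝ :=
  ((k : ℝ) * ((n : ℝ) - (k : ℝ))) / ((k : ℝ) * Real.exp ε + (n : ℝ) - (k : ℝ))

lemma gK_denom_pos {n k : ℕ} (ε : ℝ) (hkn : k ≤ n) (hn : 1 ≤ n) :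
    0 < (k : ℝ) * Real.exp ε + (n : ℝ) - (k : ℝ) := by
  have hE : (0:ℝ) < Real.exp ε := Real.exp_pos ε
  rcases Nat.eq_zero_or_pos k with hk | hk
  · subst hk; simp; exact_mod_cast hn
  · have h1 : (1:ℝ) ≤ (k:ℝ) := by exact_mod_cast hk
    have h2 : (k:ℝ) ≤ (n:ℝ) := by exact_mod_cast hkn
    nlinarith
lemma maxK_spec (n : ℕ) (ε : ℝ) (hn : 2 ≤ n) :
    (∃ k : ℕ, 1 ≤ k ∧ 2 * k ≤ n ∧ maxK n ε = gK n ε k) ∧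
    (∀ k : ℕ, 1 ≤ k → 2 * k ≤ n → gK n ε k ≤ maxK n ε) := by
  classical
  set Fs : Finset ℝ := (Finset.Icc 1 (n / 2)).image (gK n ε) with hFs
  have hset : {x : ℝ | ∃ k : ℕ, 1 ≤ k ∧ 2 * k ≤ n ∧
      x = ((k : ℝ) * ((n : ℝ) - (k : ℝ))) / ((k : ℝ) * Real.exp ε + (n : ℝ) - (k : ℝ))}
      = ↑Fs := by
    ext x
    simp only [hFs, Finset.coe_image, Set.mem_image, Finset.mem_coe, Finset.mem_Icc,
      Set.mem_setOf_eq]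
    constructor
    · rintro ⟨k, hk1, hk2, rfl⟩
      exact ⟨k, ⟨hk1, by omega⟩, rfl⟩
    · rintro ⟨k, ⟨hk1, hk2⟩, rfl⟩
      exact ⟨k, hk1, by omega, rfl⟩
  have hne : Fs.Nonempty :=
    ⟨gK n ε 1, Finset.mem_image_of_mem _ (Finset.mem_Icc.mpr ⟨le_refl 1, by omega⟩)⟩
  have hmax : maxK n ε = Fs.max' hne := by
    rw [maxK, hset]; exact Finset.Nonempty.csSup_eq_max' hne
  constructor
  · obtain ⟨k, hk, hgk⟩ := Finset.mem_image.mp (Fs.max'_mem hne)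
    obtain ⟨hk1, hk2⟩ := Finset.mem_Icc.mp hk
    exact ⟨k, hk1, by omega, by rw [hmax, ← hgk]⟩
  · intro k hk1 hk2
    rw [hmax]
    exact Finset.le_max' _ _ (Finset.mem_image_of_mem _ (Finset.mem_Icc.mpr ⟨hk1, by omega⟩))

lemma maxK_vertex (n : ℕ) (ε : ℝ) (hε : 0 < ε) (hn : 2 ≤ n) :
    ∀ k : ℕ, k ≤ n → (k:ℝ) * ((n:ℝ) - (k:ℝ)) ≤ maxK n ε * ((k:ℝ) * Real.exp ε + (n:ℝ) - (k:ℝ)) := by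
  have hE1 : (1:ℝ) < Real.exp ε := by
    calc (1:ℝ) = Real.exp 0 := (Real.exp_zero).symm
      _ < Real.exp ε := Real.exp_lt_exp.mpr hε
  obtain ⟨⟨k₀, hk₀1, hk₀2, hmk⟩, hub⟩ := maxK_spec n ε hn
  have hK0 : 0 ≤ maxK n ε := by
    rw [hmk]
    apply div_nonneg
    · have h1 : (k₀:ℝ) ≤ (n:ℝ) := by exact_mod_cast (by omega : k₀ ≤ n)
      have h2 : (0:ℝ) ≤ (k₀:ℝ) := Nat.cast_nonneg _
      nlinarith
    · exact (gK_denom_pos ε (by omega) (by omega)).le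
  intro k hkn
  have hdpos := gK_denom_pos (k := k) (n := n) ε hkn (by omega)
  rcases Nat.eq_zero_or_pos k with hk0 | hk0
  · subst hk0
    simpa using mul_nonneg hK0 hdpos.le
  rcases Nat.eq_or_lt_of_le hkn with hkeq | hklt
  · subst hkeq
    have : (k:ℝ) * ((k:ℝ) - (k:ℝ)) = 0 := by ring
    rw [this]
    exact mul_nonneg hK0 hdpos.le
  by_cases h2k : 2 * k ≤ n
  · have := hub k hk0 h2k
    rw [gK, div_le_iff₀ hdpos] at this
    exact this
  · set k' : ℕ := n - k with hk'
    have hk'1 : 1 ≤ k' := by omega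
    have h2k' : 2 * k' ≤ n := by omega
    have hcast : (k' : ℝ) = (n:ℝ) - (k:ℝ) := by
      rw [hk']; push_cast [hkn]; ring
    have hd'pos := gK_denom_pos (k := k') (n := n) ε (by omega) (by omega)
    have h := hub k' hk'1 h2k'
    rw [gK, div_le_iff₀ hd'pos] at h
    rw [hcast] at h
    -- h : (n - k) * k ≤ maxK * ((n - k) * E + k)
    have hkn2 : (n:ℝ) ≤ 2 * (k:ℝ) := by exact_mod_cast (by omega : n ≤ 2 * k)
    have hprod : 0 ≤ maxK n ε * ((2*(k:ℝ) - n) * (Real.exp ε - 1)) :=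
      mul_nonneg hK0 (mul_nonneg (by linarith) (by linarith))
    nlinarith [h, hprod]

lemma Jc_eq_sum {d : ℕ} (θ : ℝ) (p q : Fin d → ℝ) :
    Jc θ p q = ∑ k, fTheta θ (p k) (q k) := by
  unfold Jc fTheta
  apply Finset.sum_congr rfl
  intro k _
  have h : (q k - p k) ^ 2 = (p k - q k) ^ 2 := by ring
  rw [h]

lemma Spair_le_col {θ E K : ℝ} (hθ0 : 0 ≤ θ) (hθ1 : θ ≤ 1) (hE : 1 < E) {n : ℕ} (hn : 0 < n)
    (hK : ∀ k : ℕ, k ≤ n → (k:ℝ) * ((n:ℝ) - (k:ℝ)) ≤ K * ((k:ℝ) * E + (n:ℝ) - (k:ℝ)))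
    (v : Fin n → ℝ) (hpos : ∀ i, 0 < v i) (hdp : ∀ i j, v i ≤ E * v j) :
    Spair θ v ≤ ((fTheta θ E 1 + fTheta θ 1 E) * K) * ∑ i, v i := by
  haveI : Nonempty (Fin n) := Fin.pos_iff_nonempty.mp hn
  have huniv : (Finset.univ : Finset (Fin n)).Nonempty := Finset.univ_nonempty
  set m : ℝ := Finset.univ.inf' huniv v with hm
  obtain ⟨j0, _, hj0⟩ := Finset.exists_mem_eq_inf' huniv v
  have hmpos : 0 < m := by rw [hm, hj0]; exact hpos j0
  have hle : ∀ i, m ≤ v i := fun i => Finset.inf'_le v (Finset.mem_univ i)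
  have hup : ∀ i, v i ≤ E * m := fun i => by
    rw [hm, hj0]; exact hdp i j0
  set w : Fin n → ℝ := fun i => v i / m with hw
  have hbox : ∀ i, 1 ≤ w i ∧ w i ≤ E := by
    intro i
    constructor
    · rw [hw]; exact (one_le_div hmpos).mpr (hle i)
    · rw [hw]; exact (div_le_iff₀ hmpos).mpr (by linarith [hup i])
  have hvw : ∀ i, v i = m * w i := by
    intro i; rw [hw]; field_simp
  have hSv : Spair θ v = m * Spair θ w := by
    unfold Spair
    rw [Finset.mul_sum]
    apply Finset.sum_congr rfl
    intro i _
    rw [Finset.mul_sum]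
    apply Finset.sum_congr rfl
    intro j _
    by_cases hij : i = j
    · simp [hij]
    · rw [if_pos (show i ≠ j from hij), if_pos (show i ≠ j from hij),
        hvw i, hvw j, fTheta_smul hmpos.ne']
  have hSum : ∑ i, v i = m * ∑ i, w i := by
    rw [Finset.mul_sum]
    exact Finset.sum_congr rfl (fun i _ => hvw i)
  have hbr := box_reduce hθ0 hθ1 hE (vertex_bound hθ0 hθ1 hE.le hK) w hbox
  rw [hSv, hSum]
  calc m * Spair θ w ≤ m * (((fTheta θ E 1 + fTheta θ 1 E) * K) * ∑ i, w i) :=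
        mul_le_mul_of_nonneg_left hbr hmpos.le
    _ = ((fTheta θ E 1 + fTheta θ 1 E) * K) * (m * ∑ i, w i) := by ring

lemma sum_pairs_Jc_le {θ ε : ℝ} (hθ0 : 0 ≤ θ) (hθ1 : θ ≤ 1) (hε : 0 < ε) {n d : ℕ}
    (hn : 2 ≤ n) (p : Fin n → Fin d → ℝ) (hdp : IsDP ε p) (hpos : ∀ i k, 0 < p i k) :
    (∑ i, ∑ j, if i ≠ j then Jc θ (p i) (p j) else 0) ≤
      ((fTheta θ (Real.exp ε) 1 + fTheta θ 1 (Real.exp ε)) * maxK n ε) * n := by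
  set E := Real.exp ε with hEdef
  have hE : 1 < E := by
    rw [hEdef]
    calc (1:ℝ) = Real.exp 0 := (Real.exp_zero).symm
      _ < Real.exp ε := Real.exp_lt_exp.mpr hε
  have hK := maxK_vertex n ε hε hn
  have step1 : ∀ i j : Fin n, (if i ≠ j then Jc θ (p i) (p j) else 0)
      = ∑ k, (if i ≠ j then fTheta θ (p i k) (p j k) else 0) := by
    intro i j
    by_cases hij : i ≠ j
    · rw [if_pos hij, Jc_eq_sum]
      exact Finset.sum_congr rfl (fun k _ => (if_pos hij).symm)
    · rw [if_neg hij]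
      symm
      rw [Finset.sum_eq_zero]
      intro k _; rw [if_neg hij]
  calc (∑ i, ∑ j, if i ≠ j then Jc θ (p i) (p j) else 0)
      = ∑ i, ∑ j, ∑ k, (if i ≠ j then fTheta θ (p i k) (p j k) else 0) := by
        exact Finset.sum_congr rfl (fun i _ => Finset.sum_congr rfl (fun j _ => step1 i j))
    _ = ∑ k, Spair θ (fun i => p i k) := by
        have h1 : ∀ i : Fin n, ∑ j : Fin n, ∑ k : Fin d, (if i ≠ j then fTheta θ (p i k) (p j k) else 0)
            = ∑ k : Fin d, ∑ j : Fin n, (if i ≠ j then fTheta θ (p i k) (p j k) else 0) :=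
          fun i => Finset.sum_comm
        rw [Finset.sum_congr rfl (fun i _ => h1 i), Finset.sum_comm]
        apply Finset.sum_congr rfl
        intro k _
        rfl
    _ ≤ ∑ k : Fin d, ((fTheta θ E 1 + fTheta θ 1 E) * maxK n ε) * ∑ i, p i k := by
        apply Finset.sum_le_sum
        intro k _
        exact Spair_le_col hθ0 hθ1 hE (by omega) hK (fun i => p i k)
          (fun i => hpos i k) (fun i j => hdp.2 i j k)
    _ = ((fTheta θ E 1 + fTheta θ 1 E) * maxK n ε) * ∑ i : Fin n, ∑ k, p i k := by
        rw [← Finset.mul_sum, Finset.sum_comm]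
    _ = ((fTheta θ E 1 + fTheta θ 1 E) * maxK n ε) * n := by
        have : ∀ i : Fin n, ∑ k, p i k = 1 := fun i => (hdp.1 i).2
        rw [Finset.sum_congr rfl (fun i _ => this i), Finset.sum_const, Finset.card_univ]
        simp

lemma sum_ite_pairs {n : ℕ} (hn : 1 ≤ n) (c : ℝ) :
    ∑ i : Fin n, ∑ j : Fin n, (if i ≠ j then c else 0) = (n:ℝ) * ((n:ℝ) - 1) * c := by
  classical
  have hinner : ∀ i : Fin n, ∑ j : Fin n, (if i ≠ j then c else 0) = ((n:ℝ) - 1) * c := by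
    intro i
    rw [← Finset.sum_filter]
    have hfil : Finset.univ.filter (fun j => i ≠ j) = Finset.univ.erase i := by
      ext j
      simp only [Finset.mem_filter, Finset.mem_univ, true_and, Finset.mem_erase, and_true]
      exact ne_comm
    rw [hfil, Finset.sum_const, Finset.card_erase_of_mem (Finset.mem_univ i), Finset.card_univ,
      Fintype.card_fin, nsmul_eq_mul]
    congr 1
    push_cast [Nat.cast_sub hn]
    ring
  rw [Finset.sum_congr rfl (fun i _ => hinner i), Finset.sum_const, Finset.card_univ,
    Fintype.card_fin, nsmul_eq_mul]
  ring

lemma min_le_avg {n d : ℕ} (θ : ℝ) (hn : 2 ≤ n) (p : Fin n → Fin d → ℝ) :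
    minPairsC θ p ≤ avgPairsC θ p := by
  haveI inst : Nonempty {q : Fin n × Fin n // q.1 ≠ q.2} :=
    ⟨⟨(⟨0, by omega⟩, ⟨1, by omega⟩), by simp [Fin.ext_iff]⟩⟩
  have hlow : ∀ (i j : Fin n), i ≠ j → minPairsC θ p ≤ Jc θ (p i) (p j) := fun i j h =>
    ciInf_le (Finite.bddBelow_range _) (⟨(i,j), h⟩ : {q : Fin n × Fin n // q.1 ≠ q.2})
  have hsum : (n:ℝ) * ((n:ℝ) - 1) * minPairsC θ p
      ≤ ∑ i, ∑ j, (if i ≠ j then Jc θ (p i) (p j) else 0) := by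
    rw [← sum_ite_pairs (by omega) (minPairsC θ p)]
    apply Finset.sum_le_sum; intro i _
    apply Finset.sum_le_sum; intro j _
    by_cases hij : i ≠ j
    · rw [if_pos hij, if_pos hij]; exact hlow i j hij
    · rw [if_neg hij, if_neg hij]
  have hnn : (0:ℝ) < (n:ℝ) * ((n:ℝ) - 1) := by
    have h2 : (2:ℝ) ≤ (n:ℝ) := by exact_mod_cast hn
    nlinarith
  unfold avgPairsC
  rw [le_div_iff₀ hnn]
  linarith [hsum]

lemma pairs_eq_of_const {n d : ℕ} (θ : ℝ) (hn : 2 ≤ n) (p : Fin n → Fin d → ℝ) (J : ℝ)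
    (h : ∀ i j : Fin n, i ≠ j → Jc θ (p i) (p j) = J) :
    minPairsC θ p = J ∧ avgPairsC θ p = J := by
  haveI inst : Nonempty {q : Fin n × Fin n // q.1 ≠ q.2} :=
    ⟨⟨(⟨0, by omega⟩, ⟨1, by omega⟩), by simp [Fin.ext_iff]⟩⟩
  constructor
  · apply le_antisymm
    · obtain ⟨ij⟩ := inst
      calc minPairsC θ p ≤ Jc θ (p ij.val.1) (p ij.val.2) :=
            ciInf_le (Finite.bddBelow_range _) ij
        _ = J := h _ _ ij.2
    · exact le_ciInf (fun ij => (h _ _ ij.2).ge)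
  · unfold avgPairsC
    have hnum : ∑ i, ∑ j, (if i ≠ j then Jc θ (p i) (p j) else 0)
        = (n:ℝ) * ((n:ℝ) - 1) * J := by
      rw [← sum_ite_pairs (by omega : 1 ≤ n) J]
      apply Finset.sum_congr rfl; intro i _
      apply Finset.sum_congr rfl; intro j _
      by_cases hij : i ≠ j
      · rw [if_pos hij, if_pos hij, h i j hij]
      · rw [if_neg hij, if_neg hij]
    rw [hnum]
    have hnn : ((n:ℝ) * ((n:ℝ) - 1)) ≠ 0 := by
      have h2 : (2:ℝ) ≤ (n:ℝ) := by exact_mod_cast hn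
      nlinarith
    exact mul_div_cancel_left₀ J hnn


lemma count1 {n k : ℕ} (hk1 : 1 ≤ k) (i : Fin n) :
    ((Finset.powersetCard k (Finset.univ : Finset (Fin n))).filter (fun S => i ∈ S)).card
      = (n-1).choose (k-1) := by
  classical
  have htarget : (Finset.powersetCard (k-1) ((Finset.univ : Finset (Fin n)).erase i)).card
      = (n-1).choose (k-1) := by
    rw [Finset.card_powersetCard, Finset.card_erase_of_mem (Finset.mem_univ i),
      Finset.card_univ, Fintype.card_fin]
  rw [← htarget]
  refine Finset.card_bij' (fun S _ => S.erase i) (fun T _ => insert i T) ?_ ?_ ?_ ?_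
  · intro S hS
    obtain ⟨hS1, hS2⟩ := Finset.mem_filter.mp hS
    obtain ⟨hsub, hcard⟩ := Finset.mem_powersetCard.mp hS1
    exact Finset.mem_powersetCard.mpr ⟨Finset.erase_subset_erase i hsub,
      by rw [Finset.card_erase_of_mem hS2, hcard]⟩
  · intro T hT
    obtain ⟨hsub, hcard⟩ := Finset.mem_powersetCard.mp hT
    have hiT : i ∉ T := fun h => (Finset.mem_erase.mp (hsub h)).1 rfl
    refine Finset.mem_filter.mpr ⟨Finset.mem_powersetCard.mpr ⟨Finset.subset_univ _, ?_⟩,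
      Finset.mem_insert_self i T⟩
    rw [Finset.card_insert_of_notMem hiT, hcard]
    omega
  · intro S hS
    exact Finset.insert_erase (Finset.mem_filter.mp hS).2
  · intro T hT
    obtain ⟨hsub, _⟩ := Finset.mem_powersetCard.mp hT
    exact Finset.erase_insert (fun h => (Finset.mem_erase.mp (hsub h)).1 rfl)

lemma count2 {n k : ℕ} (hk1 : 1 ≤ k) {i j : Fin n} (hij : i ≠ j) :
    ((Finset.powersetCard k (Finset.univ : Finset (Fin n))).filter
        (fun S => i ∈ S ∧ j ∉ S)).card = (n-2).choose (k-1) := by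
  classical
  have hmem : i ∈ (Finset.univ : Finset (Fin n)).erase j :=
    Finset.mem_erase.mpr ⟨hij, Finset.mem_univ i⟩
  have htarget : (Finset.powersetCard (k-1)
      (((Finset.univ : Finset (Fin n)).erase j).erase i)).card = (n-2).choose (k-1) := by
    rw [Finset.card_powersetCard, Finset.card_erase_of_mem hmem,
      Finset.card_erase_of_mem (Finset.mem_univ j), Finset.card_univ, Fintype.card_fin]
    congr 1
  rw [← htarget]
  refine Finset.card_bij' (fun S _ => S.erase i) (fun T _ => insert i T) ?_ ?_ ?_ ?_
  · intro S hS
    have hmem' := Finset.mem_filter.mp hS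
    have hS1 := hmem'.1
    have hiS := hmem'.2.1
    have hjS := hmem'.2.2
    obtain ⟨hsub, hcard⟩ := Finset.mem_powersetCard.mp hS1
    refine Finset.mem_powersetCard.mpr ⟨?_, by rw [Finset.card_erase_of_mem hiS, hcard]⟩
    intro x hx
    obtain ⟨hxi, hxS⟩ := Finset.mem_erase.mp hx
    exact Finset.mem_erase.mpr ⟨hxi, Finset.mem_erase.mpr ⟨fun h => hjS (h ▸ hxS), Finset.mem_univ x⟩⟩
  · intro T hT
    obtain ⟨hsub, hcard⟩ := Finset.mem_powersetCard.mp hT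
    have hiT : i ∉ T := fun h => (Finset.mem_erase.mp (hsub h)).1 rfl
    have hjT : j ∉ T := fun h => (Finset.mem_erase.mp (Finset.mem_erase.mp (hsub h)).2).1 rfl
    refine Finset.mem_filter.mpr ⟨Finset.mem_powersetCard.mpr ⟨Finset.subset_univ _, ?_⟩,
      Finset.mem_insert_self i T, ?_⟩
    · rw [Finset.card_insert_of_notMem hiT, hcard]; omega
    · intro h
      rcases Finset.mem_insert.mp h with h1 | h2
      · exact hij h1.symm
      · exact hjT h2
  · intro S hS
    exact Finset.insert_erase (Finset.mem_filter.mp hS).2.1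
  · intro T hT
    obtain ⟨hsub, _⟩ := Finset.mem_powersetCard.mp hT
    exact Finset.erase_insert (fun h => (Finset.mem_erase.mp (hsub h)).1 rfl)

lemma construction {θ ε : ℝ} (hθ0 : 0 ≤ θ) (hθ1 : θ ≤ 1) (hε : 0 < ε) {n k : ℕ}
    (hn : 2 ≤ n) (hk1 : 1 ≤ k) (hk2 : 2 * k ≤ n) :
    ∃ (d : ℕ) (p : Fin n → Fin d → ℝ), IsDP ε p ∧ (∀ i c, 0 < p i c) ∧
      ∀ i j : Fin n, i ≠ j → Jc θ (p i) (p j) =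
        (fTheta θ (Real.exp ε) 1 + fTheta θ 1 (Real.exp ε)) / ((n:ℝ) - 1) * gK n ε k := by
  classical
  set E := Real.exp ε with hEdef
  have hE : 1 < E := by
    rw [hEdef]
    calc (1:ℝ) = Real.exp 0 := (Real.exp_zero).symm
      _ < Real.exp ε := Real.exp_lt_exp.mpr hε
  have hE0 : 0 < E := lt_trans one_pos hE
  set 𝒮 : Finset (Finset (Fin n)) := Finset.powersetCard k (Finset.univ : Finset (Fin n))
    with h𝒮
  set d : ℕ := 𝒮.card with hd
  set e : {S // S ∈ 𝒮} ≃ Fin d := 𝒮.equivFin with he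
  set c1 : ℝ := ((n-1).choose (k-1) : ℝ) with hc1
  set c2 : ℝ := ((n-1).choose k : ℝ) with hc2
  set c0 : ℝ := ((n-2).choose (k-1) : ℝ) with hc0
  have hc1pos : 0 < c1 := by
    rw [hc1]; exact_mod_cast Nat.choose_pos (by omega)
  have hc2pos : 0 < c2 := by
    rw [hc2]; exact_mod_cast Nat.choose_pos (by omega)
  have hc0pos : 0 < c0 := by
    rw [hc0]; exact_mod_cast Nat.choose_pos (by omega)
  have hdenpos : 0 < E * c1 + c2 := by positivity
  set m : ℝ := 1 / (E * c1 + c2) with hm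
  have hmpos : 0 < m := by rw [hm]; positivity
  set p : Fin n → Fin d → ℝ := fun i c => if i ∈ (e.symm c : Finset (Fin n)) then E * m else m
    with hp
  have hppos : ∀ i c, 0 < p i c := by
    intro i c
    rw [hp]
    dsimp only
    split
    · positivity
    · exact hmpos
  -- sums to one
  have hcards : 𝒮.card = n.choose k := by
    rw [h𝒮, Finset.card_powersetCard, Finset.card_univ, Fintype.card_fin]
  have hpascal : n.choose k = (n-1).choose (k-1) + (n-1).choose k := by
    obtain ⟨k', rfl⟩ : ∃ k', k = k' + 1 := ⟨k - 1, by omega⟩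
    obtain ⟨n2, rfl⟩ : ∃ n2, n = n2 + 2 := ⟨n - 2, by omega⟩
    simpa using Nat.choose_succ_succ (n2 + 1) k'
  have hprob : ∀ i, ∑ c, p i c = 1 := by
    intro i
    have : ∑ c, p i c = ∑ S ∈ 𝒮, (if i ∈ S then E * m else m) := by
      rw [← Finset.sum_coe_sort 𝒮 (fun S => if i ∈ S then E * m else m)]
      exact Fintype.sum_equiv e.symm _ _ (fun c => rfl)
    rw [this, Finset.sum_ite, Finset.sum_const, Finset.sum_const, nsmul_eq_mul, nsmul_eq_mul]
    have hcard1 : (𝒮.filter (fun S => i ∈ S)).card = (n-1).choose (k-1) := count1 hk1 i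
    have hcard2 : (𝒮.filter (fun S => ¬ i ∈ S)).card = (n-1).choose k := by
      have h1 := Finset.card_filter_add_card_filter_not (s := 𝒮) (p := fun S => i ∈ S)
      have h2 : (𝒮.filter (fun S => i ∈ S)).card = (n-1).choose (k-1) := count1 hk1 i
      have h3 := hcards
      have h4 := hpascal
      omega
    rw [hcard1, hcard2, ← hc1, ← hc2]
    rw [hm]
    field_simp
  -- DP property
  have hdp : IsDP ε p := by
    constructor
    · exact fun i => ⟨fun c => (hppos i c).le, hprob i⟩
    · intro i j c
      rw [hp]
      dsimp only
      rw [← hEdef]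
      have hf1 : (0:ℝ) ≤ E * m * (E - 1) :=
        mul_nonneg (mul_nonneg hE0.le hmpos.le) (by linarith)
      have hf2 : (0:ℝ) ≤ m * (E - 1) := mul_nonneg hmpos.le (by linarith)
      have hf3 : (0:ℝ) ≤ m * (E - 1) * (E + 1) :=
        mul_nonneg hf2 (by linarith)
      split <;> split <;> nlinarith [hf1, hf2, hf3]
  refine ⟨d, p, hdp, hppos, ?_⟩
  -- the choose identities
  have hIcast : c0 * ((n:ℝ) - 1) = c1 * ((n:ℝ) - (k:ℝ)) := by
    obtain ⟨k', rfl⟩ : ∃ k', k = k' + 1 := ⟨k - 1, by omega⟩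
    obtain ⟨n2, rfl⟩ : ∃ n2, n = n2 + 2 := ⟨n - 2, by omega⟩
    have hnat := Nat.choose_mul_succ_eq n2 k'
    have hle : k' ≤ n2 + 1 := by omega
    rw [hc0, hc1]
    have hc : ((n2 + 2 - 1).choose (k' + 1 - 1) : ℝ) = ((n2+1).choose k' : ℝ) := by norm_num
    have hc' : ((n2 + 2 - 2).choose (k' + 1 - 1) : ℝ) = (n2.choose k' : ℝ) := by norm_num
    rw [hc, hc']
    have := congrArg (fun x : ℕ => (x:ℝ)) hnat
    push_cast [Nat.cast_sub hle] at this ⊢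
    linarith [this]
  have hIIcast : ((n:ℝ) - 1) * c0 = c2 * (k:ℝ) := by
    obtain ⟨k', rfl⟩ : ∃ k', k = k' + 1 := ⟨k - 1, by omega⟩
    obtain ⟨n2, rfl⟩ : ∃ n2, n = n2 + 2 := ⟨n - 2, by omega⟩
    have hnat := Nat.add_one_mul_choose_eq n2 k'
    rw [hc0, hc2]
    have hc : ((n2 + 2 - 2).choose (k' + 1 - 1) : ℝ) = (n2.choose k' : ℝ) := by norm_num
    have hc' : ((n2 + 2 - 1).choose (k' + 1) : ℝ) = ((n2+1).choose (k'+1) : ℝ) := by norm_num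
    rw [hc, hc']
    have := congrArg (fun x : ℕ => (x:ℝ)) hnat
    push_cast at this ⊢
    linarith [this]
  have hgdenpos : 0 < (k:ℝ) * E + (n:ℝ) - (k:ℝ) := by
    rw [hEdef]; exact gK_denom_pos ε (by omega) (by omega)
  have hn1 : (0:ℝ) < (n:ℝ) - 1 := by
    have : (2:ℝ) ≤ (n:ℝ) := by exact_mod_cast hn
    linarith
  have hmc : m * c0 = ((k:ℝ) * ((n:ℝ) - (k:ℝ))) / (((n:ℝ) - 1) * ((k:ℝ) * E + (n:ℝ) - (k:ℝ))) := by
    rw [hm, one_div, inv_mul_eq_div, div_eq_div_iff hdenpos.ne' (by positivity)]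
    linear_combination ((k:ℝ) * E) * hIcast + ((n:ℝ) - (k:ℝ)) * hIIcast
  -- main computation
  intro i j hij
  rw [Jc_eq_sum]
  have hstep : ∀ c : Fin d, fTheta θ (p i c) (p j c) =
      (if i ∈ ((e.symm c : {S // S ∈ 𝒮}) : Finset (Fin n)) ∧ j ∉ ((e.symm c : {S // S ∈ 𝒮}) : Finset (Fin n)) then m * fTheta θ E 1 else 0)
        + (if j ∈ ((e.symm c : {S // S ∈ 𝒮}) : Finset (Fin n)) ∧ i ∉ ((e.symm c : {S // S ∈ 𝒮}) : Finset (Fin n)) then m * fTheta θ 1 E else 0) := by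
    intro c
    rw [hp]
    dsimp only
    set S : Finset (Fin n) := ((e.symm c : {S // S ∈ 𝒮}) : Finset (Fin n))
    have hme : E * m = m * E := by ring
    have hm1 : (m:ℝ) = m * 1 := by ring
    by_cases hiS : i ∈ S <;> by_cases hjS : j ∈ S
    · rw [if_pos hiS, if_pos hjS, if_neg (fun h => h.2 hjS), if_neg (fun h => h.2 hiS),
        fTheta_self]
      ring
    · rw [if_pos hiS, if_neg hjS, if_pos ⟨hiS, hjS⟩, if_neg (fun h => hjS h.1), hme]
      nth_rewrite 2 [hm1]
      rw [fTheta_smul hmpos.ne']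
      ring
    · rw [if_neg hiS, if_pos hjS, if_neg (fun h => hiS h.1), if_pos ⟨hjS, hiS⟩, hme]
      nth_rewrite 1 [hm1]
      rw [fTheta_smul hmpos.ne']
      ring
    · rw [if_neg hiS, if_neg hjS, if_neg (fun h => hiS h.1), if_neg (fun h => hjS h.1),
        fTheta_self]
      ring
  have h2 : ∑ c : Fin d, fTheta θ (p i c) (p j c)
      = ∑ S ∈ 𝒮, ((if i ∈ S ∧ j ∉ S then m * fTheta θ E 1 else 0)
        + (if j ∈ S ∧ i ∉ S then m * fTheta θ 1 E else 0)) := by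
    rw [← Finset.sum_coe_sort 𝒮 (fun S => (if i ∈ S ∧ j ∉ S then m * fTheta θ E 1 else 0)
        + (if j ∈ S ∧ i ∉ S then m * fTheta θ 1 E else 0))]
    exact Fintype.sum_equiv e.symm _ _ (fun c => hstep c)
  rw [h2, Finset.sum_add_distrib]
  have hA : ∑ S ∈ 𝒮, (if i ∈ S ∧ j ∉ S then m * fTheta θ E 1 else 0)
      = c0 * (m * fTheta θ E 1) := by
    rw [← Finset.sum_filter, Finset.sum_const, nsmul_eq_mul, count2 hk1 hij, ← hc0]
  have hB : ∑ S ∈ 𝒮, (if j ∈ S ∧ i ∉ S then m * fTheta θ 1 E else 0)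
      = c0 * (m * fTheta θ 1 E) := by
    rw [← Finset.sum_filter, Finset.sum_const, nsmul_eq_mul, count2 hk1 hij.symm, ← hc0]
  rw [hA, hB]
  rw [show c0 * (m * fTheta θ E 1) + c0 * (m * fTheta θ 1 E)
      = (m * c0) * (fTheta θ E 1 + fTheta θ 1 E) by ring, hmc, gK, ← hEdef]
  field_simp


/-- the sup over `ε`-DP `n`-tuples of the average of `J_θ(p_i,p_j)` over
ordered pairs `i ≠ j` equals the sup of the minimum, and both equal
`((f_θ(e^ε,1)+f_θ(1,e^ε))/(n−1)) · max_{1 ≤ k ≤ n/2} k(n−k)/(k e^ε + n − k)`. -/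
theorem statement1 (θ ε : ℝ) (hθ : θ ∈ Set.Icc (0 : ℝ) 1) (hε : 0 < ε)
    (n : ℕ) (hn : 2 ≤ n) :
    MCavg n ε θ = MC n ε θ ∧
    MC n ε θ =
      (fTheta θ (Real.exp ε) 1 + fTheta θ 1 (Real.exp ε)) / ((n : ℝ) - 1) * maxK n ε := by
  obtain ⟨hθ0, hθ1⟩ := hθ
  set T : ℝ := (fTheta θ (Real.exp ε) 1 + fTheta θ 1 (Real.exp ε)) / ((n:ℝ) - 1) * maxK n ε
    with hT
  have hnn : (0:ℝ) < (n:ℝ) * ((n:ℝ) - 1) := by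
    have h2 : (2:ℝ) ≤ (n:ℝ) := by exact_mod_cast hn
    nlinarith
  have hn1 : ((n:ℝ) - 1) ≠ 0 := by
    have h2 : (2:ℝ) ≤ (n:ℝ) := by exact_mod_cast hn
    intro h; linarith
  obtain ⟨⟨k₀, hk₀1, hk₀2, hmk⟩, _⟩ := maxK_spec n ε hn
  obtain ⟨d₀, p₀, hdp₀, hpos₀, hJ₀⟩ := construction hθ0 hθ1 hε hn hk₀1 hk₀2
  have hJ₀' : ∀ i j : Fin n, i ≠ j → Jc θ (p₀ i) (p₀ j) = T := by
    intro i j hij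
    rw [hJ₀ i j hij, hT, hmk]
  obtain ⟨hmin₀, havg₀⟩ := pairs_eq_of_const θ hn p₀ T hJ₀'
  have hub : ∀ x ∈ {x : ℝ | ∃ (d : ℕ) (p : Fin n → Fin d → ℝ),
      IsDP ε p ∧ (∀ i k, 0 < p i k) ∧ x = avgPairsC θ p}, x ≤ T := by
    rintro x ⟨d, p, hdp, hpos, rfl⟩
    unfold avgPairsC
    rw [div_le_iff₀ hnn]
    calc (∑ i, ∑ j, if i ≠ j then Jc θ (p i) (p j) else 0)
        ≤ ((fTheta θ (Real.exp ε) 1 + fTheta θ 1 (Real.exp ε)) * maxK n ε) * n :=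
          sum_pairs_Jc_le hθ0 hθ1 hε hn p hdp hpos
      _ = T * ((n:ℝ) * ((n:ℝ) - 1)) := by
          rw [hT]
          field_simp
  have hMCavg_mem : T ∈ {x : ℝ | ∃ (d : ℕ) (p : Fin n → Fin d → ℝ),
      IsDP ε p ∧ (∀ i k, 0 < p i k) ∧ x = avgPairsC θ p} :=
    ⟨d₀, p₀, hdp₀, hpos₀, havg₀.symm⟩
  have hMC_mem : T ∈ {x : ℝ | ∃ (d : ℕ) (p : Fin n → Fin d → ℝ),
      IsDP ε p ∧ (∀ i k, 0 < p i k) ∧ x = minPairsC θ p} :=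
    ⟨d₀, p₀, hdp₀, hpos₀, hmin₀.symm⟩
  have hMC_ub : ∀ x ∈ {x : ℝ | ∃ (d : ℕ) (p : Fin n → Fin d → ℝ),
      IsDP ε p ∧ (∀ i k, 0 < p i k) ∧ x = minPairsC θ p}, x ≤ T := by
    rintro x ⟨d, p, hdp, hpos, rfl⟩
    calc minPairsC θ p ≤ avgPairsC θ p := min_le_avg θ hn p
      _ ≤ T := hub _ ⟨d, p, hdp, hpos, rfl⟩
  have h1 : MC n ε θ = T := by
    unfold MC
    exact le_antisymm (csSup_le ⟨T, hMC_mem⟩ hMC_ub) (le_csSup ⟨T, hMC_ub⟩ hMC_mem)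
  have h2 : MCavg n ε θ = T := by
    unfold MCavg
    exact le_antisymm (csSup_le ⟨T, hMCavg_mem⟩ hub) (le_csSup ⟨T, hub⟩ hMCavg_mem)
  exact ⟨h2.trans h1.symm, h1⟩

end
end

section
/- Let ε > 0 be real and n ≥ 3 an integer. If a CQ ε-DP n-tuple (ρ_1,…,ρ_n) of full-rank density matrices satisfies M_n^C(ε;J_θ) < avg_{i≠j} J_θ(ρ_i,ρ_j) for some θ ∈ [0,1], then (ρ_1,…,ρ_n) does not lie in EC_n(ε). -/
open scoped BigOperators Classical ComplexOrder
open Matrix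

noncomputable section

open Filter

lemma cs_abs {ι : Type*} [Fintype ι] (a b : ι → ℂ) :
    ‖∑ i, (starRingEnd ℂ) (a i) * b i‖ ^ 2 ≤
      (∑ i, ‖a i‖ ^ 2) * (∑ i, ‖b i‖ ^ 2) := by
  have h1 : ‖∑ i, (starRingEnd ℂ) (a i) * b i‖ ≤
      ∑ i, ‖a i‖ * ‖b i‖ := by
    refine le_trans (norm_sum_le _ _) (le_of_eq ?_)
    refine Finset.sum_congr rfl fun i _ => ?_
    rw [norm_mul, Complex.norm_conj]
  calc ‖∑ i, (starRingEnd ℂ) (a i) * b i‖ ^ 2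
      ≤ (∑ i, ‖a i‖ * ‖b i‖) ^ 2 := by
        exact pow_le_pow_left₀ (norm_nonneg _) h1 2
    _ ≤ (∑ i, ‖a i‖ ^ 2) * (∑ i, ‖b i‖ ^ 2) :=
        Finset.sum_mul_sq_le_sq_mul_sq _ _ _

lemma trace_conjTranspose_mul {d : ℕ} (A B : Matrix (Fin d) (Fin d) ℂ) :
    (Aᴴ * B).trace = ∑ p : Fin d × Fin d, (starRingEnd ℂ) (A p.1 p.2) * B p.1 p.2 := by
  rw [Fintype.sum_prod_type]
  simp [Matrix.trace, Matrix.diag, Matrix.mul_apply, Matrix.conjTranspose_apply]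
  rw [Finset.sum_comm]


lemma conj_mul_self (w : ℂ) : (starRingEnd ℂ) w * w = ((‖w‖ ^ 2 : ℝ) : ℂ) := by
  rw [mul_comm, Complex.mul_conj]
  norm_cast
  rw [Complex.sq_norm]

lemma conj_mul_self_re (w : ℂ) : ((starRingEnd ℂ) w * w).re = ‖w‖ ^ 2 := by
  rw [conj_mul_self]; exact Complex.ofReal_re _

lemma traceform_bound {d : ℕ} {σ : Matrix (Fin d) (Fin d) ℂ} (hσ : σ.PosSemidef)
    (hτ : σ.trace = 1) (Z : Matrix (Fin d) (Fin d) ℂ) (dk c : ℝ) (hc : 0 ≤ c)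
    (hcd : c = 0 → dk = 0) :
    2 * dk * ((Zᴴ * σ).trace).re - c * ((Zᴴ * σ * Z).trace).re ≤ dk ^ 2 / c := by
  open scoped MatrixOrder in
  obtain ⟨C, hC⟩ := CStarAlgebra.nonneg_iff_eq_star_mul_self.mp hσ.nonneg
  obtain rfl : σ = Cᴴ * C := hC
  have hs : (Zᴴ * (Cᴴ * C)).trace
      = ∑ p : Fin d × Fin d, (starRingEnd ℂ) ((C * Z) p.1 p.2) * C p.1 p.2 := by
    rw [← trace_conjTranspose_mul]
    rw [Matrix.conjTranspose_mul, Matrix.mul_assoc]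
  have hr : (Zᴴ * (Cᴴ * C) * Z).trace
      = ∑ p : Fin d × Fin d, (starRingEnd ℂ) ((C * Z) p.1 p.2) * (C * Z) p.1 p.2 := by
    rw [← trace_conjTranspose_mul]
    rw [Matrix.conjTranspose_mul, Matrix.mul_assoc, Matrix.mul_assoc, Matrix.mul_assoc]
  have hτ' : ∑ p : Fin d × Fin d, ‖C p.1 p.2‖ ^ 2 = 1 := by
    have := hτ
    rw [trace_conjTranspose_mul] at this
    have h2 : ∑ p : Fin d × Fin d, (starRingEnd ℂ) (C p.1 p.2) * C p.1 p.2
        = ((∑ p : Fin d × Fin d, (‖C p.1 p.2‖ ^ 2 : ℝ) : ℝ) : ℂ) := by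
      rw [Complex.ofReal_sum]
      exact Finset.sum_congr rfl fun p _ => conj_mul_self _
    rw [h2] at this
    exact_mod_cast this
  have hrre : ((Zᴴ * (Cᴴ * C) * Z).trace).re
      = ∑ p : Fin d × Fin d, ‖(C * Z) p.1 p.2‖ ^ 2 := by
    rw [hr]
    rw [Complex.re_sum]
    exact Finset.sum_congr rfl fun p _ => conj_mul_self_re _
  have hCS : ‖(Zᴴ * (Cᴴ * C)).trace‖ ^ 2 ≤ ((Zᴴ * (Cᴴ * C) * Z).trace).re := by
    rw [hrre, hs]
    calc ‖∑ p : Fin d × Fin d, (starRingEnd ℂ) ((C * Z) p.1 p.2) * C p.1 p.2‖ ^ 2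
        ≤ (∑ p : Fin d × Fin d, ‖(C * Z) p.1 p.2‖ ^ 2)
            * (∑ p : Fin d × Fin d, ‖C p.1 p.2‖ ^ 2) := cs_abs _ _
      _ = ∑ p : Fin d × Fin d, ‖(C * Z) p.1 p.2‖ ^ 2 := by rw [hτ', mul_one]
  have hds : dk * ((Zᴴ * (Cᴴ * C)).trace).re ≤ |dk| * ‖(Zᴴ * (Cᴴ * C)).trace‖ := by
    calc dk * ((Zᴴ * (Cᴴ * C)).trace).re ≤ |dk * ((Zᴴ * (Cᴴ * C)).trace).re| := le_abs_self _
      _ = |dk| * |((Zᴴ * (Cᴴ * C)).trace).re| := abs_mul _ _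
      _ ≤ |dk| * ‖(Zᴴ * (Cᴴ * C)).trace‖ := by
          refine mul_le_mul_of_nonneg_left ?_ (abs_nonneg _)
          exact Complex.abs_re_le_norm _
  rcases eq_or_lt_of_le hc with hc0 | hcpos
  · have hdk := hcd hc0.symm
    rw [hdk, ← hc0]
    simp
  · rw [le_div_iff₀ hcpos]
    have hrnn : 0 ≤ ((Zᴴ * (Cᴴ * C) * Z).trace).re := by
      rw [hrre]
      exact Finset.sum_nonneg fun p _ => sq_nonneg _
    nlinarith [sq_nonneg (c * ‖(Zᴴ * (Cᴴ * C)).trace‖ - |dk|), sq_abs dk,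
      norm_nonneg ((Zᴴ * (Cᴴ * C)).trace),
      mul_le_mul_of_nonneg_left hCS (le_of_lt hcpos), hds]

-- basic facts
lemma denom_pos {θ a b : ℝ} (hθ : θ ∈ Set.Icc (0:ℝ) 1) (ha : 0 < a) (hb : 0 < b) :
    0 < (1 - θ) * a + θ * b := by
  have hm : 0 < min a b := lt_min ha hb
  nlinarith [mul_le_mul_of_nonneg_left (min_le_left a b) (show (0:ℝ) ≤ 1 - θ by linarith [hθ.2]),
    mul_le_mul_of_nonneg_left (min_le_right a b) hθ.1]

lemma denom_nonneg {θ a b : ℝ} (hθ : θ ∈ Set.Icc (0:ℝ) 1) (ha : 0 ≤ a) (hb : 0 ≤ b) :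
    0 ≤ (1 - θ) * a + θ * b :=
  add_nonneg (mul_nonneg (by linarith [hθ.2]) ha) (mul_nonneg hθ.1 hb)

lemma Jc_nonneg {d : ℕ} {θ : ℝ} (hθ : θ ∈ Set.Icc (0:ℝ) 1) {p q : Fin d → ℝ}
    (hp : ∀ k, 0 ≤ p k) (hq : ∀ k, 0 ≤ q k) : 0 ≤ Jc θ p q :=
  Finset.sum_nonneg fun k _ => div_nonneg (sq_nonneg _) (denom_nonneg hθ (hp k) (hq k))

lemma Jc_le_bound {d : ℕ} {θ ε : ℝ} (hθ : θ ∈ Set.Icc (0:ℝ) 1) (hε : 0 < ε)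
    {p q : Fin d → ℝ} (hp : IsProbVec p) (hq : IsProbVec q)
    (hpp : ∀ k, 0 < p k) (hqp : ∀ k, 0 < q k)
    (hdp1 : ∀ k, p k ≤ Real.exp ε * q k) (hdp2 : ∀ k, q k ≤ Real.exp ε * p k) :
    Jc θ p q ≤ 2 * (Real.exp ε - 1) ^ 2 := by
  have hE : 1 ≤ Real.exp ε := Real.one_le_exp hε.le
  have hterm : ∀ k, (q k - p k) ^ 2 / ((1 - θ) * p k + θ * q k)
      ≤ (Real.exp ε - 1) ^ 2 * (p k + q k) := by
    intro k
    have hD := denom_pos hθ (hpp k) (hqp k)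
    rw [div_le_iff₀ hD]
    have h1 : (q k - p k) ^ 2 ≤ (Real.exp ε - 1) ^ 2 * (p k * q k) := by
      rcases le_total (p k) (q k) with h | h
      · have ha : q k - p k ≤ (Real.exp ε - 1) * p k := by linarith [hdp2 k]
        have hb : (0:ℝ) ≤ q k - p k := by linarith
        nlinarith [hpp k, hqp k, sq_nonneg (Real.exp ε - 1),
          mul_nonneg (mul_nonneg (sq_nonneg (Real.exp ε - 1)) (hpp k).le) hb]
      · have ha : p k - q k ≤ (Real.exp ε - 1) * q k := by linarith [hdp1 k]
        have hb : (0:ℝ) ≤ p k - q k := by linarith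
        nlinarith [hpp k, hqp k, sq_nonneg (Real.exp ε - 1),
          mul_nonneg (mul_nonneg (sq_nonneg (Real.exp ε - 1)) (hqp k).le) hb]
    have h2 : p k * q k ≤ (p k + q k) * ((1 - θ) * p k + θ * q k) := by
      nlinarith [mul_nonneg (show (0:ℝ) ≤ 1 - θ by linarith [hθ.2]) (sq_nonneg (p k)),
        mul_nonneg hθ.1 (sq_nonneg (q k))]
    nlinarith [sq_nonneg (Real.exp ε - 1)]
  calc Jc θ p q ≤ ∑ k, (Real.exp ε - 1) ^ 2 * (p k + q k) :=
        Finset.sum_le_sum fun k _ => hterm k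
    _ = 2 * (Real.exp ε - 1) ^ 2 := by
        rw [← Finset.mul_sum, Finset.sum_add_distrib, hp.2, hq.2]; ring

lemma MC_bddAbove {n : ℕ} {ε θ : ℝ} (hθ : θ ∈ Set.Icc (0:ℝ) 1) (hε : 0 < ε) (hn : 3 ≤ n) :
    BddAbove {x : ℝ | ∃ (d : ℕ) (p : Fin n → Fin d → ℝ),
      IsDP ε p ∧ (∀ i k, 0 < p i k) ∧ x = minPairsC θ p} := by
  refine ⟨2 * (Real.exp ε - 1) ^ 2, ?_⟩
  rintro x ⟨d, p, hDP, hpos, rfl⟩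
  have hbdd : BddBelow (Set.range fun ij : {q : Fin n × Fin n // q.1 ≠ q.2} =>
      Jc θ (p ij.val.1) (p ij.val.2)) := by
    refine ⟨0, ?_⟩
    rintro _ ⟨ij, rfl⟩
    exact Jc_nonneg hθ (fun k => (hpos _ k).le) (fun k => (hpos _ k).le)
  have h01 : ((⟨0, by omega⟩ : Fin n) : Fin n) ≠ ⟨1, by omega⟩ := by
    intro h
    simpa using congrArg Fin.val h
  refine ciInf_le_of_le hbdd ⟨(⟨0, by omega⟩, ⟨1, by omega⟩), h01⟩ ?_
  exact Jc_le_bound hθ hε (hDP.1 _) (hDP.1 _) (hpos _) (hpos _)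
    (fun k => hDP.2 _ _ k) (fun k => hDP.2 _ _ k)

lemma sum_perm_pair {n : ℕ} (f : Fin n → Fin n → ℝ) {i j i' j' : Fin n}
    (hij : i ≠ j) (hij' : i' ≠ j') :
    ∑ π : Equiv.Perm (Fin n), f (π i) (π j) = ∑ π : Equiv.Perm (Fin n), f (π i') (π j') := by
  obtain ⟨τ, hτi, hτj⟩ : ∃ τ : Equiv.Perm (Fin n), τ i' = i ∧ τ j' = j := by
    have hs1i : Equiv.swap i' i i' = i := Equiv.swap_apply_left _ _
    have hj''i : Equiv.swap i' i j' ≠ i := by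
      intro h
      exact hij' ((Equiv.swap i' i).injective (h.trans hs1i.symm)).symm
    refine ⟨(Equiv.swap (Equiv.swap i' i j') j) * Equiv.swap i' i, ?_, ?_⟩
    · rw [Equiv.Perm.mul_apply, hs1i]
      exact Equiv.swap_apply_of_ne_of_ne (Ne.symm hj''i) hij
    · rw [Equiv.Perm.mul_apply]
      exact Equiv.swap_apply_left _ _
  calc ∑ π : Equiv.Perm (Fin n), f (π i) (π j)
      = ∑ π : Equiv.Perm (Fin n), f ((π * τ) i') ((π * τ) j') := by
        refine Finset.sum_congr rfl fun π _ => ?_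
        rw [Equiv.Perm.mul_apply, Equiv.Perm.mul_apply, hτi, hτj]
    _ = ∑ π : Equiv.Perm (Fin n), f (π i') (π j') := by
        have := Equiv.sum_comp (Equiv.mulRight τ) (fun σ : Equiv.Perm (Fin n) => f (σ i') (σ j'))
        simpa using this

lemma posDef_real_smul {d : ℕ} {A : Matrix (Fin d) (Fin d) ℂ} (hA : A.PosDef)
    {r : ℝ} (hr : 0 < r) : ((r : ℂ) • A).PosDef := by
  refine ⟨?_, fun x hx => ?_⟩
  · unfold Matrix.IsHermitian
    rw [Matrix.conjTranspose_smul, hA.1.eq]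
    congr 1
    simp [Complex.star_def, Complex.conj_ofReal]
  · exact (hA.smul (Complex.zero_lt_real.mpr hr)).2 hx

lemma posdef_combo {d : ℕ} {θ : ℝ} (hθ : θ ∈ Set.Icc (0:ℝ) 1)
    {A B : Matrix (Fin d) (Fin d) ℂ} (hA : A.PosDef) (hB : B.PosDef) :
    ((1 - θ : ℂ) • A + (θ : ℂ) • B).PosDef := by
  rcases eq_or_lt_of_le hθ.1 with h0 | h0
  · have : ((1 - θ : ℂ) • A + (θ : ℂ) • B) = A := by rw [← h0]; simp
    rw [this]; exact hA
  rcases eq_or_lt_of_le hθ.2 with h1 | h1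
  · have : ((1 - θ : ℂ) • A + (θ : ℂ) • B) = B := by rw [h1]; simp
    rw [this]; exact hB
  · have hcast : ((1 - θ : ℝ) : ℂ) = (1 - θ : ℂ) := by push_cast; ring
    have hA' := posDef_real_smul hA (r := 1 - θ) (by linarith)
    have hB' := posDef_real_smul hB (r := θ) h0
    rw [hcast] at hA'
    exact hA'.add hB'

lemma col_zero {θ a b E : ℝ} (hθ : θ ∈ Set.Icc (0:ℝ) 1) (ha : 0 ≤ a) (hb : 0 ≤ b)
    (hE : 0 < E) (h1 : a ≤ E * b) (h2 : b ≤ E * a) (h : (1 - θ) * a + θ * b = 0) :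
    a = 0 ∧ b = 0 := by
  have hth1 : (0:ℝ) ≤ 1 - θ := by linarith [hθ.2]
  have h3 : (1 - θ) * a = 0 ∧ θ * b = 0 := by
    constructor <;> nlinarith [mul_nonneg hth1 ha, mul_nonneg hθ.1 hb]
  rcases mul_eq_zero.mp h3.1 with hθ1 | ha0
  · have hb0 : b = 0 := by
      rcases mul_eq_zero.mp h3.2 with h' | h'
      · linarith
      · exact h'
    have ha0 : a = 0 := le_antisymm (by nlinarith) ha
    exact ⟨ha0, hb0⟩
  · have hb0 : b = 0 := le_antisymm (by nlinarith) hb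
    exact ⟨ha0, hb0⟩

lemma Jq_le_Jc {dd m : ℕ} {θ : ℝ} (hθ : θ ∈ Set.Icc (0:ℝ) 1)
    (a b : Fin m → ℝ) (ha : ∀ k, 0 ≤ a k) (hb : ∀ k, 0 ≤ b k)
    (hzero : ∀ k, (1 - θ) * a k + θ * b k = 0 → b k - a k = 0)
    (σ : Fin m → Matrix (Fin dd) (Fin dd) ℂ) (hσ : ∀ k, IsDensityMatrix (σ k))
    (hunit : IsUnit ((1 - θ : ℂ) • (∑ k, (a k : ℂ) • σ k) +
      (θ : ℂ) • (∑ k, (b k : ℂ) • σ k)).det) :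
    Jq θ (∑ k, (a k : ℂ) • σ k) (∑ k, (b k : ℂ) • σ k) ≤ Jc θ a b := by
  set A := ∑ k, (a k : ℂ) • σ k with hA
  set B := ∑ k, (b k : ℂ) • σ k with hB
  set M := (1 - θ : ℂ) • A + (θ : ℂ) • B with hM
  set X := B - A with hX
  set Z := M⁻¹ * X with hZ
  have hMsum : M = ∑ k, (((1 - θ) * a k + θ * b k : ℝ) : ℂ) • σ k := by
    rw [hM, hA, hB, Finset.smul_sum, Finset.smul_sum, ← Finset.sum_add_distrib]
    refine Finset.sum_congr rfl fun k _ => ?_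
    rw [smul_smul, smul_smul, ← add_smul]
    congr 1
    push_cast
    ring
  have hXsum : X = ∑ k, ((b k - a k : ℝ) : ℂ) • σ k := by
    rw [hX, hA, hB, ← Finset.sum_sub_distrib]
    refine Finset.sum_congr rfl fun k _ => ?_
    rw [← sub_smul]
    congr 1
    push_cast
    ring
  have hherm : ∀ (c : Fin m → ℝ), (∑ k, ((c k : ℝ) : ℂ) • σ k)ᴴ = ∑ k, ((c k : ℝ) : ℂ) • σ k := by
    intro c
    rw [Matrix.conjTranspose_sum]
    refine Finset.sum_congr rfl fun k _ => ?_
    simp only [Matrix.conjTranspose_smul, Complex.star_def, Complex.conj_ofReal]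
    rw [(hσ k).1.1]
  have hXH : Xᴴ = X := by rw [hXsum]; exact hherm _
  have hMH : Mᴴ = M := by rw [hMsum]; exact hherm _
  have hMinvH : (M⁻¹)ᴴ = M⁻¹ := by rw [Matrix.conjTranspose_nonsing_inv, hMH]
  have hMinvM : M⁻¹ * M = 1 := Matrix.nonsing_inv_mul M hunit
  have hMMinv : M * M⁻¹ = 1 := Matrix.mul_nonsing_inv M hunit
  have hZH : Zᴴ = X * M⁻¹ := by rw [hZ, Matrix.conjTranspose_mul, hXH, hMinvH]
  have e1 : Zᴴ * X = X * M⁻¹ * X := by rw [hZH]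
  have e2 : Zᴴ * (M * Z) = X * M⁻¹ * X := by
    rw [hZH, hZ, ← Matrix.mul_assoc M M⁻¹ X, hMMinv, Matrix.one_mul, Matrix.mul_assoc]
  have e0 : (X ^ 2 * M⁻¹).trace = (X * M⁻¹ * X).trace := by
    rw [pow_two]
    exact (Matrix.trace_mul_cycle X M⁻¹ X).symm
  have hJq : Jq θ A B = ((X ^ 2 * M⁻¹).trace).re := rfl
  have hexp1 : (Zᴴ * X).trace = ∑ k, ((b k - a k : ℝ) : ℂ) * (Zᴴ * σ k).trace := by
    rw [hXsum, Matrix.mul_sum, Matrix.trace_sum]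
    refine Finset.sum_congr rfl fun k _ => ?_
    rw [Matrix.mul_smul, Matrix.trace_smul, smul_eq_mul]
  have hexp2 : (Zᴴ * (M * Z)).trace
      = ∑ k, (((1 - θ) * a k + θ * b k : ℝ) : ℂ) * (Zᴴ * (σ k * Z)).trace := by
    rw [hMsum, Matrix.sum_mul, Matrix.mul_sum, Matrix.trace_sum]
    refine Finset.sum_congr rfl fun k _ => ?_
    rw [Matrix.smul_mul, Matrix.mul_smul, Matrix.trace_smul, smul_eq_mul]
  have hcnn : ∀ k, 0 ≤ (1 - θ) * a k + θ * b k := fun k =>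
    add_nonneg (mul_nonneg (by linarith [hθ.2]) (ha k)) (mul_nonneg hθ.1 (hb k))
  have key : ((X ^ 2 * M⁻¹).trace).re
      = ∑ k, (2 * (b k - a k) * ((Zᴴ * σ k).trace).re
          - ((1 - θ) * a k + θ * b k) * ((Zᴴ * (σ k * Z)).trace).re) := by
    have : (X ^ 2 * M⁻¹).trace = 2 * (Zᴴ * X).trace - (Zᴴ * (M * Z)).trace := by
      rw [e0, e1, e2]; ring
    rw [this, hexp1, hexp2]
    rw [Complex.sub_re]
    rw [Finset.mul_sum, Complex.re_sum, Complex.re_sum, ← Finset.sum_sub_distrib]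
    refine Finset.sum_congr rfl fun k _ => ?_
    have h2 : (2 * (((b k - a k : ℝ) : ℂ) * (Zᴴ * σ k).trace)).re
        = 2 * (b k - a k) * ((Zᴴ * σ k).trace).re := by
      simp [Complex.mul_re]
      ring
    have h3 : ((((1 - θ) * a k + θ * b k : ℝ) : ℂ) * (Zᴴ * (σ k * Z)).trace).re
        = ((1 - θ) * a k + θ * b k) * ((Zᴴ * (σ k * Z)).trace).re := by
      simp [Complex.mul_re]
    rw [h2, h3]
  rw [hJq, key]
  refine Finset.sum_le_sum fun k _ => ?_
  have := traceform_bound (hσ k).1 (hσ k).2 Z (b k - a k) ((1 - θ) * a k + θ * b k)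
    (hcnn k) (hzero k)
  rw [Matrix.mul_assoc] at this
  exact this

lemma sym_step {n m : ℕ} {ε θ : ℝ} (hε : 0 < ε) (hθ : θ ∈ Set.Icc (0:ℝ) 1) (hn : 3 ≤ n)
    (P : Fin n → Fin m → ℝ) (hDP : IsDP ε P) (hpos : ∀ i k, 0 < P i k) :
    avgPairsC θ P ≤ MC n ε θ := by
  classical
  have hF : (0:ℝ) < (n.factorial : ℝ) := by
    exact_mod_cast Nat.factorial_pos n
  have hFne : (n.factorial : ℝ) ≠ 0 := hF.ne'
  have hne01 : (⟨0, by omega⟩ : Fin n) ≠ (⟨1, by omega⟩ : Fin n) := by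
    intro h; simpa using congrArg Fin.val h
  set ι := Equiv.Perm (Fin n) × Fin m with hι
  set N := Fintype.card ι with hN
  set e := Fintype.equivFin ι with he
  set q : Fin n → Fin N → ℝ :=
    fun i t => P ((e.symm t).1 i) ((e.symm t).2) / (n.factorial : ℝ) with hq
  -- q is a DP tuple with positive entries
  have hqpos : ∀ i t, 0 < q i t := fun i t => div_pos (hpos _ _) hF
  have hqprob : ∀ i, IsProbVec (q i) := by
    intro i
    refine ⟨fun t => (hqpos i t).le, ?_⟩
    have h1 : ∑ t, q i t = ∑ x : ι, P (x.1 i) x.2 / (n.factorial : ℝ) :=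
      Equiv.sum_comp e.symm (fun x : ι => P (x.1 i) x.2 / (n.factorial : ℝ))
    rw [h1, Fintype.sum_prod_type]
    have h2 : ∀ π : Equiv.Perm (Fin n),
        ∑ k, P (π i) k / (n.factorial : ℝ) = 1 / (n.factorial : ℝ) := by
      intro π
      rw [← Finset.sum_div, (hDP.1 (π i)).2]
    rw [Finset.sum_congr rfl fun π _ => h2 π, Finset.sum_const, Finset.card_univ,
      Fintype.card_perm, Fintype.card_fin, nsmul_eq_mul]
    field_simp
  have hqDP : ∀ i j t, q i t ≤ Real.exp ε * q j t := by
    intro i j t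
    have h := hDP.2 ((e.symm t).1 i) ((e.symm t).1 j) ((e.symm t).2)
    show P ((e.symm t).1 i) (e.symm t).2 / (n.factorial : ℝ)
        ≤ Real.exp ε * (P ((e.symm t).1 j) (e.symm t).2 / (n.factorial : ℝ))
    rw [← mul_div_assoc, div_le_div_iff₀ hF hF]
    nlinarith
  -- value of each pair
  have hJq : ∀ i j, Jc θ (q i) (q j)
      = (1 / (n.factorial : ℝ)) * ∑ π : Equiv.Perm (Fin n), Jc θ (P (π i)) (P (π j)) := by
    intro i j
    have h1 : Jc θ (q i) (q j) = ∑ x : ι,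
        (P (x.1 j) x.2 / (n.factorial : ℝ) - P (x.1 i) x.2 / (n.factorial : ℝ)) ^ 2 /
          ((1 - θ) * (P (x.1 i) x.2 / (n.factorial : ℝ))
            + θ * (P (x.1 j) x.2 / (n.factorial : ℝ))) := by
      unfold Jc
      exact Equiv.sum_comp e.symm (fun x : ι =>
        (P (x.1 j) x.2 / (n.factorial : ℝ) - P (x.1 i) x.2 / (n.factorial : ℝ)) ^ 2 /
          ((1 - θ) * (P (x.1 i) x.2 / (n.factorial : ℝ))
            + θ * (P (x.1 j) x.2 / (n.factorial : ℝ))))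
    rw [h1, Fintype.sum_prod_type]
    rw [Finset.mul_sum]
    refine Finset.sum_congr rfl fun π _ => ?_
    unfold Jc
    rw [Finset.mul_sum]
    refine Finset.sum_congr rfl fun k _ => ?_
    dsimp only
    have hD : 0 < (1 - θ) * P (π i) k + θ * P (π j) k :=
      denom_pos hθ (hpos _ _) (hpos _ _)
    have hDne := hD.ne'
    field_simp
  -- the sum over permutations is pair-independent
  set S : ℝ := ∑ π : Equiv.Perm (Fin n), Jc θ (P (π ⟨0, by omega⟩)) (P (π ⟨1, by omega⟩))
    with hS
  have hconst : ∀ i j : Fin n, i ≠ j →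
      ∑ π : Equiv.Perm (Fin n), Jc θ (P (π i)) (P (π j)) = S :=
    fun i j hij => sum_perm_pair (fun a b => Jc θ (P a) (P b)) hij hne01
  set T : ℝ := ∑ i, ∑ j, if i ≠ j then Jc θ (P i) (P j) else 0 with hT
  -- relation between S and T
  have hrel : (n.factorial : ℝ) * T = (n : ℝ) * ((n : ℝ) - 1) * S := by
    have hA1 : ∑ i, ∑ j, (if i ≠ j then (∑ π : Equiv.Perm (Fin n),
        Jc θ (P (π i)) (P (π j))) else 0) = (n.factorial : ℝ) * T := by
      have step1 : ∀ i j : Fin n, (if i ≠ j then (∑ π : Equiv.Perm (Fin n),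
          Jc θ (P (π i)) (P (π j))) else 0)
          = ∑ π : Equiv.Perm (Fin n), (if i ≠ j then Jc θ (P (π i)) (P (π j)) else 0) := by
        intro i j
        by_cases h : i ≠ j
        · simp [h]
        · simp [h]
      calc ∑ i, ∑ j, (if i ≠ j then (∑ π : Equiv.Perm (Fin n),
            Jc θ (P (π i)) (P (π j))) else 0)
          = ∑ i, ∑ j, ∑ π : Equiv.Perm (Fin n),
              (if i ≠ j then Jc θ (P (π i)) (P (π j)) else 0) := by
            refine Finset.sum_congr rfl fun i _ => Finset.sum_congr rfl fun j _ => step1 i j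
        _ = ∑ i, ∑ π : Equiv.Perm (Fin n), ∑ j,
              (if i ≠ j then Jc θ (P (π i)) (P (π j)) else 0) := by
            refine Finset.sum_congr rfl fun i _ => Finset.sum_comm
        _ = ∑ π : Equiv.Perm (Fin n), ∑ i, ∑ j,
              (if i ≠ j then Jc θ (P (π i)) (P (π j)) else 0) := Finset.sum_comm
        _ = ∑ _π : Equiv.Perm (Fin n), T := by
            refine Finset.sum_congr rfl fun π _ => ?_
            have inner : ∀ a : Fin n, ∑ j, (if a ≠ π j then Jc θ (P a) (P (π j)) else 0)
                = ∑ b, (if a ≠ b then Jc θ (P a) (P b) else 0) :=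
              fun a => Equiv.sum_comp π (fun b => if a ≠ b then Jc θ (P a) (P b) else 0)
            calc ∑ i, ∑ j, (if i ≠ j then Jc θ (P (π i)) (P (π j)) else 0)
                = ∑ i, ∑ j, (if π i ≠ π j then Jc θ (P (π i)) (P (π j)) else 0) := by
                  refine Finset.sum_congr rfl fun i _ => Finset.sum_congr rfl fun j _ => ?_
                  congr 1
                  simp [Ne, EmbeddingLike.apply_eq_iff_eq]
              _ = ∑ i, ∑ b, (if π i ≠ b then Jc θ (P (π i)) (P b) else 0) := by
                  refine Finset.sum_congr rfl fun i _ => inner (π i)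
              _ = ∑ a, ∑ b, (if a ≠ b then Jc θ (P a) (P b) else 0) :=
                  Equiv.sum_comp π (fun a => ∑ b, (if a ≠ b then Jc θ (P a) (P b) else 0))
        _ = (n.factorial : ℝ) * T := by
            rw [Finset.sum_const, Finset.card_univ, Fintype.card_perm, Fintype.card_fin,
              nsmul_eq_mul]
    have hA2 : ∑ i, ∑ j, (if i ≠ j then (∑ π : Equiv.Perm (Fin n),
        Jc θ (P (π i)) (P (π j))) else 0) = (n : ℝ) * ((n : ℝ) - 1) * S := by
      have step1 : ∀ i j : Fin n, (if i ≠ j then (∑ π : Equiv.Perm (Fin n),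
          Jc θ (P (π i)) (P (π j))) else 0) = (if i ≠ j then S else 0) := by
        intro i j
        by_cases h : i ≠ j
        · rw [if_pos h, if_pos h, hconst i j h]
        · rw [if_neg h, if_neg h]
      have step2 : ∀ i : Fin n, ∑ j, (if i ≠ j then S else 0) = ((n : ℝ) - 1) * S := by
        intro i
        have : ∀ j : Fin n, (if i ≠ j then S else 0) = S - (if i = j then S else 0) := by
          intro j
          by_cases h : i = j
          · simp [h]
          · simp [h]
        rw [Finset.sum_congr rfl fun j _ => this j, Finset.sum_sub_distrib,
          Finset.sum_const, Finset.card_univ, Fintype.card_fin, nsmul_eq_mul,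
          Finset.sum_ite_eq, if_pos (Finset.mem_univ i)]
        ring
      rw [Finset.sum_congr rfl fun i _ => Finset.sum_congr rfl fun j _ => step1 i j]
      rw [Finset.sum_congr rfl fun i _ => step2 i, Finset.sum_const, Finset.card_univ,
        Fintype.card_fin, nsmul_eq_mul]
      ring
    rw [← hA1, hA2]
  -- the min of the q tuple equals the average for P
  have hnn1 : (0:ℝ) < (n : ℝ) * ((n : ℝ) - 1) := by
    have : (3:ℝ) ≤ (n:ℝ) := by exact_mod_cast hn
    nlinarith
  have havg : avgPairsC θ P = (1 / (n.factorial : ℝ)) * S := by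
    unfold avgPairsC
    rw [← hT]
    have hTS : T = (n : ℝ) * ((n : ℝ) - 1) * S / (n.factorial : ℝ) := by
      rw [eq_div_iff hFne]
      linarith [hrel]
    rw [hTS]
    have hn1 : (n:ℝ) - 1 ≠ 0 := by
      have : (3:ℝ) ≤ (n:ℝ) := by exact_mod_cast hn
      linarith
    field_simp
  have hmin : minPairsC θ q = avgPairsC θ P := by
    have hval : ∀ ij : {x : Fin n × Fin n // x.1 ≠ x.2},
        Jc θ (q ij.val.1) (q ij.val.2) = avgPairsC θ P := by
      intro ij
      rw [hJq, hconst _ _ ij.prop, havg]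
    haveI : Nonempty {x : Fin n × Fin n // x.1 ≠ x.2} :=
      ⟨⟨(⟨0, by omega⟩, ⟨1, by omega⟩), hne01⟩⟩
    unfold minPairsC
    rw [iInf_congr hval, ciInf_const]
  rw [← hmin]
  exact le_csSup (MC_bddAbove hθ hε hn) ⟨N, q, ⟨hqprob, hqDP⟩, hqpos, rfl⟩

lemma avg_le_MC {n m : ℕ} {ε θ : ℝ} (hε : 0 < ε) (hθ : θ ∈ Set.Icc (0:ℝ) 1) (hn : 3 ≤ n)
    (p : Fin n → Fin m → ℝ) (hp : IsDP ε p) :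
    avgPairsC θ p ≤ MC n ε θ := by
  have hm : 0 < m := by
    by_contra hm0
    push_neg at hm0
    interval_cases m
    have := (hp.1 ⟨0, by omega⟩).2
    simpa using this
  have hmR : (0:ℝ) < (m:ℝ) := by exact_mod_cast hm
  have hstep : ∀ δ ∈ Set.Ioo (0:ℝ) 1,
      avgPairsC θ (fun i k => (1 - δ) * p i k + δ * (1 / (m:ℝ))) ≤ MC n ε θ := by
    intro δ hδ
    apply sym_step hε hθ hn
    · constructor
      · intro i
        constructor
        · intro k
          have := (hp.1 i).1 k
          have h3 : 0 ≤ δ * (1/(m:ℝ)) := mul_nonneg hδ.1.le (by positivity)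
          nlinarith [hδ.2]
        · show ∑ k, ((1 - δ) * p i k + δ * (1/(m:ℝ))) = 1
          rw [Finset.sum_add_distrib, ← Finset.mul_sum, (hp.1 i).2, Finset.sum_const,
            Finset.card_univ, Fintype.card_fin, nsmul_eq_mul]
          field_simp
          ring
      · intro i j k
        show (1 - δ) * p i k + δ * (1/(m:ℝ)) ≤ Real.exp ε * ((1 - δ) * p j k + δ * (1/(m:ℝ)))
        have hEd := Real.one_le_exp hε.le
        have h3 : 0 ≤ δ * (1/(m:ℝ)) := mul_nonneg hδ.1.le (by positivity)
        nlinarith [mul_le_mul_of_nonneg_left (hp.2 i j k)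
          (show (0:ℝ) ≤ 1 - δ by linarith [hδ.2])]
    · intro i k
      have h1 := (hp.1 i).1 k
      have h2 : 0 < δ * (1/(m:ℝ)) := by
        have := hδ.1
        positivity
      nlinarith [hδ.2]
  have htend : Tendsto (fun δ => avgPairsC θ (fun i k => (1 - δ) * p i k + δ * (1 / (m:ℝ))))
      (nhdsWithin 0 (Set.Ioo (0:ℝ) 1)) (nhds (avgPairsC θ p)) := by
    apply Filter.Tendsto.mono_left _ nhdsWithin_le_nhds
    unfold avgPairsC
    apply Filter.Tendsto.div_const
    apply tendsto_finset_sum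
    intro i _
    apply tendsto_finset_sum
    intro j _
    by_cases hij : i ≠ j
    · simp only [if_pos hij]
      unfold Jc
      apply tendsto_finset_sum
      intro k _
      by_cases hD : (1 - θ) * p i k + θ * p j k = 0
      · obtain ⟨hpi, hpj⟩ := col_zero hθ ((hp.1 i).1 k) ((hp.1 j).1 k) (Real.exp_pos ε)
          (hp.2 i j k) (hp.2 j i k) hD
        have hzero : ∀ δ : ℝ, ((1 - δ) * p j k + δ * (1/(m:ℝ))
            - ((1 - δ) * p i k + δ * (1/(m:ℝ)))) ^ 2 /
            ((1 - θ) * ((1 - δ) * p i k + δ * (1/(m:ℝ)))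
              + θ * ((1 - δ) * p j k + δ * (1/(m:ℝ)))) = 0 := by
          intro δ
          rw [hpi, hpj]
          simp
        have htgt : (p j k - p i k) ^ 2 / ((1 - θ) * p i k + θ * p j k) = 0 := by
          rw [hpi, hpj]
          simp
        rw [htgt]
        refine Tendsto.congr (fun δ => (hzero δ).symm) tendsto_const_nhds
      · have hcont1 : Continuous (fun δ : ℝ => ((1 - δ) * p j k + δ * (1/(m:ℝ))
            - ((1 - δ) * p i k + δ * (1/(m:ℝ)))) ^ 2) := by fun_prop
        have hnum : Tendsto (fun δ : ℝ => ((1 - δ) * p j k + δ * (1/(m:ℝ))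
            - ((1 - δ) * p i k + δ * (1/(m:ℝ)))) ^ 2) (nhds 0)
            (nhds ((p j k - p i k) ^ 2)) := by
          have h0 := hcont1.tendsto 0
          simpa using h0
        have hcont2 : Continuous (fun δ : ℝ => (1 - θ) * ((1 - δ) * p i k + δ * (1/(m:ℝ)))
            + θ * ((1 - δ) * p j k + δ * (1/(m:ℝ)))) := by fun_prop
        have hden : Tendsto (fun δ : ℝ => (1 - θ) * ((1 - δ) * p i k + δ * (1/(m:ℝ)))
            + θ * ((1 - δ) * p j k + δ * (1/(m:ℝ)))) (nhds 0)
            (nhds ((1 - θ) * p i k + θ * p j k)) := by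
          have h0 := hcont2.tendsto 0
          simpa using h0
        exact hnum.div hden hD
    · simp only [if_neg hij]
      exact tendsto_const_nhds
  haveI : (nhdsWithin (0:ℝ) (Set.Ioo (0:ℝ) 1)).NeBot := by
    rw [← mem_closure_iff_nhdsWithin_neBot, closure_Ioo (by norm_num : (0:ℝ) ≠ 1)]
    exact ⟨le_refl 0, by norm_num⟩
  refine le_of_tendsto htend ?_
  filter_upwards [self_mem_nhdsWithin] with δ hδ
  exact hstep δ hδ

/-- if a full-rank CQ `ε`-DP `n`-tuple `(ρ_i)` satisfies
`M_n^C(ε;J_θ) < avg_{i≠j} J_θ(ρ_i,ρ_j)` for some `θ ∈ [0,1]`, then it is not in `EC_n(ε)`. -/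
theorem statement6 (ε : ℝ) (hε : 0 < ε) (n : ℕ) (hn : 3 ≤ n)
    (d : ℕ) (ρ : Fin n → Matrix (Fin d) (Fin d) ℂ)
    (hCQ : IsCQDP ε ρ) (hfull : ∀ i, (ρ i).PosDef)
    (h : ∃ θ ∈ Set.Icc (0 : ℝ) 1, MC n ε θ < avgPairsQ θ ρ) :
    ¬ InEC ε ρ := by
  obtain ⟨θ, hθ, hlt⟩ := h
  intro hEC
  obtain ⟨m, p, σ, hDP, hσ, hrep⟩ := hEC
  have hpair : ∀ i j : Fin n, Jq θ (ρ i) (ρ j) ≤ Jc θ (p i) (p j) := by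
    intro i j
    have hzero : ∀ k, (1 - θ) * p i k + θ * p j k = 0 → p j k - p i k = 0 := by
      intro k hk
      obtain ⟨h1, h2⟩ := col_zero hθ ((hDP.1 i).1 k) ((hDP.1 j).1 k) (Real.exp_pos ε)
        (hDP.2 i j k) (hDP.2 j i k) hk
      rw [h1, h2, sub_zero]
    have hunit : IsUnit ((1 - θ : ℂ) • (∑ k, (p i k : ℂ) • σ k) +
        (θ : ℂ) • (∑ k, (p j k : ℂ) • σ k)).det := by
      have hpd := posdef_combo hθ (hfull i) (hfull j)
      rw [hrep i, hrep j] at hpd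
      exact hpd.det_pos.ne'.isUnit
    have hle := Jq_le_Jc hθ (p i) (p j) ((hDP.1 i).1) ((hDP.1 j).1) hzero σ hσ hunit
    rw [hrep i, hrep j]
    exact hle
  have hnn : (0:ℝ) < (n:ℝ) * ((n:ℝ) - 1) := by
    have h3 : (3:ℝ) ≤ (n:ℝ) := by exact_mod_cast hn
    nlinarith
  have havg : avgPairsQ θ ρ ≤ avgPairsC θ p := by
    unfold avgPairsQ avgPairsC
    rw [div_le_div_iff₀ hnn hnn]
    have hsum : (∑ i, ∑ j, if i ≠ j then Jq θ (ρ i) (ρ j) else 0)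
        ≤ ∑ i, ∑ j, if i ≠ j then Jc θ (p i) (p j) else 0 := by
      refine Finset.sum_le_sum fun i _ => Finset.sum_le_sum fun j _ => ?_
      by_cases hij : i ≠ j
      · rw [if_pos hij, if_pos hij]
        exact hpair i j
      · rw [if_neg hij, if_neg hij]
    nlinarith
  have h2 := avg_le_MC hε hθ hn p hDP
  linarith

end
end
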